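/- arXiv:2208.12167 — 4 statements merged into one kernel-verified Lean document; each statement's English description precedes it below -/
import Mathlib

section
/- For any positive integer n, the permanent of the 2n×2n matrix A with entries A[i][j] = 1 if i ≥ j and A[i][j] = -1 if i < j equals 0. -/
open Finset Equiv

/-- Permanent of the signed triangular pattern matrix of size `m`. -/
def permF (m : ℕ) : ℚ :=
  Matrix.permanent (Matrix.of fun i j : Fin m => if j ≤ i then (1 : ℚ) else -1)

/-- Permanent of the signed triangular pattern matrix of size `m` with row `q`
replaced by an all-ones row. -/
def permH (m q : ℕ) : ℚ :=
  Matrix.permanent (Matrix.of fun a b : Fin m =>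
    if (a : ℕ) = q then (1 : ℚ) else if b ≤ a then 1 else -1)

lemma permF_eq (m : ℕ) :
    permF m = ∑ σ : Equiv.Perm (Fin m), ∏ i : Fin m,
      (if i ≤ σ i then (1 : ℚ) else -1) := by
  simp [permF, Matrix.permanent]

lemma permH_eq (m q : ℕ) :
    permH m q = ∑ σ : Equiv.Perm (Fin m), ∏ i : Fin m,
      (if ((σ i : ℕ)) = q then (1 : ℚ) else if i ≤ σ i then 1 else -1) := by
  simp [permH, Matrix.permanent]

lemma permH_last (k : ℕ) : permH (k + 1) k = permF (k + 1) := by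
  rw [permH_eq, permF_eq]
  refine Finset.sum_congr rfl fun σ _ => Finset.prod_congr rfl fun i _ => ?_
  by_cases h : ((σ i : ℕ)) = k
  · have hle : i ≤ σ i := by
      rw [Fin.le_def, h]
      omega
    simp [h, hle]
  · simp [h]

/-- The permutation of `Fin (q+r+2)` used in the symmetry lemma. -/
def eqvQR (q r : ℕ) : Equiv.Perm (Fin (q + r + 2)) where
  toFun a := if (a : ℕ) = r then ⟨q + r + 1, by omega⟩
    else if (a : ℕ) = q + r + 1 then ⟨q, by omega⟩
    else ⟨q + r - a, by omega⟩
  invFun c := if (c : ℕ) = q + r + 1 then ⟨r, by omega⟩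
    else if (c : ℕ) = q then ⟨q + r + 1, by omega⟩
    else ⟨q + r - c, by omega⟩
  left_inv a := by
    have ha := a.isLt
    dsimp only
    by_cases h1 : (a : ℕ) = r
    · rw [if_pos h1, if_pos rfl]
      exact Fin.ext h1.symm
    · rw [if_neg h1]
      by_cases h2 : (a : ℕ) = q + r + 1
      · rw [if_pos h2, if_neg (show ¬(q = q + r + 1) by omega), if_pos rfl]
        exact Fin.ext h2.symm
      · rw [if_neg h2, if_neg (show ¬(q + r - (a : ℕ) = q + r + 1) by omega),
          if_neg (show ¬(q + r - (a : ℕ) = q) by omega)]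
        exact Fin.ext (by simp only [Fin.val_mk]; omega)
  right_inv c := by
    have hc := c.isLt
    dsimp only
    by_cases h1 : (c : ℕ) = q + r + 1
    · rw [if_pos h1]
      by_cases hrq : r = q
      · rw [if_pos (show (r : ℕ) = r from rfl)]
        exact Fin.ext (by simp only [Fin.val_mk]; omega)
      · rw [if_pos rfl]
        exact Fin.ext h1.symm
    · rw [if_neg h1]
      by_cases h2 : (c : ℕ) = q
      · rw [if_pos h2, if_neg (show ¬(q + r + 1 = r) by omega), if_pos rfl]
        exact Fin.ext h2.symm
      · rw [if_neg h2, if_neg (show ¬(q + r - (c : ℕ) = r) by omega),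
          if_neg (show ¬(q + r - (c : ℕ) = q + r + 1) by omega)]
        exact Fin.ext (by simp only [Fin.val_mk]; omega)

lemma eqvQR_val (q r : ℕ) (a : Fin (q + r + 2)) :
    ((eqvQR q r a : ℕ)) = if (a : ℕ) = r then q + r + 1
      else if (a : ℕ) = q + r + 1 then q else q + r - a := by
  simp only [eqvQR, Equiv.coe_fn_mk]
  split_ifs <;> rfl

lemma entry_eq (q r : ℕ) (a b : Fin (q + r + 2)) :
    (if (a : ℕ) = r then (1 : ℚ) else if b ≤ a then 1 else -1)
      = (if (a : ℕ) = r ∨ (a : ℕ) = q + r + 1 then (1 : ℚ) else -1) *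
        (if ((eqvQR q r a : ℕ)) = q then (1 : ℚ)
          else if Fin.rev b ≤ eqvQR q r a then 1 else -1) := by
  have ha := a.isLt
  have hb := b.isLt
  have hrev : ((Fin.rev b : ℕ)) = q + r + 1 - b := by
    simp [Fin.val_rev]
  have hval := eqvQR_val q r a
  simp only [Fin.le_def, hrev, hval]
  split_ifs <;> first | omega | norm_num

lemma prod_delta (q r : ℕ) :
    (∏ a : Fin (q + r + 2),
      (if (a : ℕ) = r ∨ (a : ℕ) = q + r + 1 then (1 : ℚ) else -1))
      = (-1) ^ (q + r + 2) := by
  have hcard : Fintype.card (Fin (q + r + 2)) = q + r + 2 := by simp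
  have hstep : ∀ a : Fin (q + r + 2),
      (if (a : ℕ) = r ∨ (a : ℕ) = q + r + 1 then (1 : ℚ) else -1)
        = (-1) * ((if a = (⟨r, by omega⟩ : Fin (q + r + 2)) then (-1 : ℚ) else 1) *
            (if a = (⟨q + r + 1, by omega⟩ : Fin (q + r + 2)) then (-1 : ℚ) else 1)) := by
    intro a
    by_cases h1 : (a : ℕ) = r
    · have e1 : a = (⟨r, by omega⟩ : Fin (q + r + 2)) := Fin.ext h1
      have e2 : a ≠ (⟨q + r + 1, by omega⟩ : Fin (q + r + 2)) := by
        simp only [ne_eq, Fin.ext_iff, h1]; omega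
      rw [if_pos (Or.inl h1), if_pos e1, if_neg e2]
      norm_num
    · by_cases h2 : (a : ℕ) = q + r + 1
      · have e1 : a ≠ (⟨r, by omega⟩ : Fin (q + r + 2)) := by
          simp only [ne_eq, Fin.ext_iff, h2]; omega
        have e2 : a = (⟨q + r + 1, by omega⟩ : Fin (q + r + 2)) := Fin.ext h2
        rw [if_pos (Or.inr h2), if_neg e1, if_pos e2]
        norm_num
      · have e1 : a ≠ (⟨r, by omega⟩ : Fin (q + r + 2)) := by
          simp only [ne_eq, Fin.ext_iff]; omega
        have e2 : a ≠ (⟨q + r + 1, by omega⟩ : Fin (q + r + 2)) := by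
          simp only [ne_eq, Fin.ext_iff]; omega
        rw [if_neg (by push_neg; exact ⟨h1, h2⟩), if_neg e1, if_neg e2]
        norm_num
  rw [Finset.prod_congr rfl fun a _ => hstep a]
  rw [Finset.prod_mul_distrib, Finset.prod_mul_distrib]
  rw [Finset.prod_const, Finset.prod_ite_eq', Finset.prod_ite_eq']
  simp [hcard]

lemma lemC (q r : ℕ) :
    permH (q + r + 2) r = (-1) ^ (q + r + 2) * permH (q + r + 2) q := by
  rw [permH_eq, permH_eq]
  have key : ∀ σ : Equiv.Perm (Fin (q + r + 2)),
      (∏ i : Fin (q + r + 2),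
        (if ((σ i : ℕ)) = r then (1 : ℚ) else if i ≤ σ i then 1 else -1))
      = (-1) ^ (q + r + 2) *
        ∏ i : Fin (q + r + 2),
          (if (((eqvQR q r * σ * Fin.revPerm : Equiv.Perm (Fin (q+r+2))) i : ℕ)) = q
            then (1 : ℚ)
            else if i ≤ (eqvQR q r * σ * Fin.revPerm : Equiv.Perm (Fin (q+r+2))) i
              then 1 else -1) := by
    intro σ
    have h1 : ∀ i : Fin (q + r + 2),
        (if ((σ i : ℕ)) = r then (1 : ℚ) else if i ≤ σ i then 1 else -1)
        = (if ((σ i : ℕ)) = r ∨ ((σ i : ℕ)) = q + r + 1 then (1 : ℚ) else -1) *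
          (if ((eqvQR q r (σ i) : ℕ)) = q then (1 : ℚ)
            else if Fin.rev i ≤ eqvQR q r (σ i) then 1 else -1) := by
      intro i
      exact entry_eq q r (σ i) i
    rw [Finset.prod_congr rfl fun i _ => h1 i, Finset.prod_mul_distrib]
    have h2 : (∏ i : Fin (q + r + 2),
        (if ((σ i : ℕ)) = r ∨ ((σ i : ℕ)) = q + r + 1 then (1 : ℚ) else -1))
        = (-1) ^ (q + r + 2) := by
      rw [Equiv.prod_comp σ
        (fun a => if (a : ℕ) = r ∨ (a : ℕ) = q + r + 1 then (1 : ℚ) else -1)]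
      exact prod_delta q r
    rw [h2]
    congr 1
    rw [← Equiv.prod_comp (Fin.revPerm : Equiv.Perm (Fin (q + r + 2)))
      (fun i => if (((eqvQR q r * σ * Fin.revPerm : Equiv.Perm (Fin (q+r+2))) i : ℕ)) = q
        then (1 : ℚ)
        else if i ≤ (eqvQR q r * σ * Fin.revPerm : Equiv.Perm (Fin (q+r+2))) i then 1 else -1)]
    refine Finset.prod_congr rfl fun i _ => ?_
    have happ : (eqvQR q r * σ * Fin.revPerm : Equiv.Perm (Fin (q+r+2))) (Fin.revPerm i)
        = eqvQR q r (σ i) := by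
      simp [Equiv.Perm.mul_apply]
    rw [happ]
    have hrr : (Fin.revPerm (i : Fin (q+r+2))) = Fin.rev i := rfl
    rw [hrr]
  have hkey : (∑ σ : Equiv.Perm (Fin (q + r + 2)), ∏ i : Fin (q + r + 2),
      (if ((σ i : ℕ)) = r then (1 : ℚ) else if i ≤ σ i then 1 else -1))
      = ∑ σ : Equiv.Perm (Fin (q + r + 2)), (-1) ^ (q + r + 2) *
        ∏ i : Fin (q + r + 2),
          (if (((eqvQR q r * σ * Fin.revPerm : Equiv.Perm (Fin (q+r+2))) i : ℕ)) = q
            then (1 : ℚ)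
            else if i ≤ (eqvQR q r * σ * Fin.revPerm : Equiv.Perm (Fin (q+r+2))) i
              then 1 else -1) :=
    Finset.sum_congr rfl fun σ _ => key σ
  rw [hkey]
  rw [← Finset.mul_sum Finset.univ _ ((-1 : ℚ) ^ (q + r + 2))]
  congr 1
  exact Equiv.sum_comp ((Equiv.mulRight (Fin.revPerm : Equiv.Perm (Fin (q+r+2)))).trans
    (Equiv.mulLeft (eqvQR q r)))
    (fun σ : Equiv.Perm (Fin (q+r+2)) => ∏ i : Fin (q+r+2),
      (if ((σ i : ℕ)) = q then (1 : ℚ) else if i ≤ σ i then 1 else -1))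

lemma lemA (m : ℕ) :
    permF (m + 1) = permF m - ∑ j : Fin m, permH m (j : ℕ) := by
  rw [permF_eq]
  rw [← Equiv.sum_comp (Equiv.Perm.decomposeFin.symm)
    (fun σ : Equiv.Perm (Fin (m+1)) => ∏ i : Fin (m+1), (if i ≤ σ i then (1 : ℚ) else -1))]
  rw [Fintype.sum_prod_type, Fin.sum_univ_succ]
  have h0 : (∑ τ : Equiv.Perm (Fin m), ∏ i : Fin (m+1),
      (if i ≤ Equiv.Perm.decomposeFin.symm (0, τ) i then (1 : ℚ) else -1)) = permF m := by
    rw [permF_eq]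
    refine Finset.sum_congr rfl fun τ _ => ?_
    rw [Fin.prod_univ_succ]
    have hz : Equiv.Perm.decomposeFin.symm (0, τ) (0 : Fin (m+1)) = 0 :=
      Equiv.Perm.decomposeFin_symm_apply_zero 0 τ
    rw [hz, if_pos (le_refl _), one_mul]
    refine Finset.prod_congr rfl fun i _ => ?_
    rw [Equiv.Perm.decomposeFin_symm_apply_succ]
    rw [Equiv.swap_self]
    simp [Fin.succ_le_succ_iff]
  rw [h0]
  have hs : ∀ j : Fin m, (∑ τ : Equiv.Perm (Fin m), ∏ i : Fin (m+1),
      (if i ≤ Equiv.Perm.decomposeFin.symm (j.succ, τ) i then (1 : ℚ) else -1))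
      = - permH m (j : ℕ) := by
    intro j
    have hterm : ∀ τ : Equiv.Perm (Fin m), (∏ i : Fin (m+1),
        (if i ≤ Equiv.Perm.decomposeFin.symm (j.succ, τ) i then (1 : ℚ) else -1))
        = - ∏ i : Fin m, (if ((τ i : ℕ)) = (j : ℕ) then (1 : ℚ)
            else if i ≤ τ i then 1 else -1) := by
      intro τ
      rw [Fin.prod_univ_succ]
      have hz : Equiv.Perm.decomposeFin.symm (j.succ, τ) (0 : Fin (m+1)) = j.succ :=
        Equiv.Perm.decomposeFin_symm_apply_zero j.succ τ
      rw [hz, if_pos (Fin.zero_le _), one_mul]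
      have hprod : (∏ i : Fin m,
          (if i.succ ≤ Equiv.Perm.decomposeFin.symm (j.succ, τ) i.succ then (1 : ℚ) else -1))
          = - ∏ i : Fin m, (if ((τ i : ℕ)) = (j : ℕ) then (1 : ℚ)
              else if i ≤ τ i then 1 else -1) := by
        have hmem := Finset.mem_univ (τ⁻¹ j)
        rw [← Finset.mul_prod_erase Finset.univ _ hmem,
          ← Finset.mul_prod_erase Finset.univ
            (fun i => if ((τ i : ℕ)) = (j : ℕ) then (1 : ℚ) else if i ≤ τ i then 1 else -1) hmem]
        have htj : τ (τ⁻¹ j) = j := Equiv.apply_symm_apply τ j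
        have hL : (if (τ⁻¹ j).succ ≤ Equiv.Perm.decomposeFin.symm (j.succ, τ) (τ⁻¹ j).succ
            then (1 : ℚ) else -1) = -1 := by
          rw [Equiv.Perm.decomposeFin_symm_apply_succ, htj, Equiv.swap_apply_right]
          rw [if_neg]
          simp [Fin.le_zero_iff, Fin.succ_ne_zero]
        have hR : (if ((τ (τ⁻¹ j) : ℕ)) = (j : ℕ) then (1 : ℚ)
            else if (τ⁻¹ j) ≤ τ (τ⁻¹ j) then 1 else -1) = 1 := by
          rw [htj, if_pos rfl]
        rw [hL, hR]
        have hrest : (∏ i ∈ Finset.univ.erase (τ⁻¹ j),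
            (if i.succ ≤ Equiv.Perm.decomposeFin.symm (j.succ, τ) i.succ then (1 : ℚ) else -1))
            = ∏ i ∈ Finset.univ.erase (τ⁻¹ j),
              (if ((τ i : ℕ)) = (j : ℕ) then (1 : ℚ) else if i ≤ τ i then 1 else -1) := by
          refine Finset.prod_congr rfl fun i hi => ?_
          have hne : i ≠ τ⁻¹ j := Finset.ne_of_mem_erase hi
          have hne2 : τ i ≠ j := fun h => hne (by rw [← h]; exact (Equiv.symm_apply_apply τ i).symm)
          rw [Equiv.Perm.decomposeFin_symm_apply_succ]
          rw [Equiv.swap_apply_of_ne_of_ne (Fin.succ_ne_zero _)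
            (fun h => hne2 (Fin.succ_injective _ h))]
          rw [if_neg (show ¬((τ i : ℕ)) = (j : ℕ) from fun h => hne2 (Fin.ext h))]
          simp only [Fin.succ_le_succ_iff]
        rw [hrest]
        ring
      rw [hprod]
    rw [Finset.sum_congr rfl fun τ _ => hterm τ, Finset.sum_neg_distrib, permH_eq]
  rw [Finset.sum_congr rfl fun j _ => hs j]
  rw [Finset.sum_neg_distrib]
  ring

lemma sum_H (m : ℕ) (hm : Odd m) : (∑ j : Fin m, permH m (j : ℕ)) = permF m := by
  obtain ⟨k, hk⟩ : ∃ k, m = k + 1 := by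
    rcases hm with ⟨t, ht⟩; exact ⟨2 * t, by omega⟩
  subst hk
  rw [Fin.sum_univ_castSucc]
  have hlast : ((Fin.last k : Fin (k+1)) : ℕ) = k := rfl
  rw [hlast, permH_last]
  have hzero : (∑ j : Fin k, permH (k + 1) ((j.castSucc : Fin (k+1)) : ℕ)) = 0 := by
    have hcast : ∀ j : Fin k, ((j.castSucc : Fin (k+1)) : ℕ) = (j : ℕ) := fun j => rfl
    rw [Finset.sum_congr rfl fun j _ => by rw [hcast]]
    rw [Fin.sum_univ_eq_sum_range (fun j => permH (k+1) j) k]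
    refine Finset.sum_involution (fun j _ => k - 1 - j) ?_ ?_ ?_ ?_
    · intro a ha
      simp only [Finset.mem_range] at ha
      have hqr : a + (k - 1 - a) + 2 = k + 1 := by omega
      have := lemC a (k - 1 - a)
      rw [hqr] at this
      have hneg : ((-1 : ℚ)) ^ (k + 1) = -1 := by
        rcases hm with ⟨t, ht⟩
        have : k + 1 = 2 * t + 1 := by omega
        rw [this, pow_succ, pow_mul]
        norm_num
      rw [hneg] at this
      rw [this]
      ring
    · intro a ha _
      simp only [Finset.mem_range] at ha
      rcases hm with ⟨t, ht⟩
      show ¬(k - 1 - a = a)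
      omega
    · intro a ha
      simp only [Finset.mem_range] at ha ⊢
      show k - 1 - a < k
      omega
    · intro a ha
      simp only [Finset.mem_range] at ha
      show k - 1 - (k - 1 - a) = a
      omega
  rw [hzero, zero_add]

/-- For any positive integer `n`, the permanent of the `2n × 2n` matrix with entry `1`
in position `(i, j)` when `i ≥ j` and `-1` when `i < j` equals `0`. -/
theorem permanent_signed_triangular_eq_zero (n : ℕ) (hn : 0 < n) :
    Matrix.permanent
      (Matrix.of fun i j : Fin (2 * n) => if j ≤ i then (1 : ℚ) else -1) = 0 := by
  show permF (2 * n) = 0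
  have h2n : 2 * n = (2 * n - 1) + 1 := by omega
  rw [h2n, lemA, sum_H _ ⟨n - 1, by omega⟩, sub_self]
end

section
/- If s_k are numbers satisfying s_1 = -1 and 1 + Σ_{k=1}^n C(2n-1, 2k-1) s_k = 0 for all n ≥ 1, then s_k = (-1)^k T_k for all k ≥ 1, where T_k are the tangent numbers defined by tan x = Σ_{k≥1} T_k x^{2k-1}/(2k-1)!. -/
/-- The formal power series of `sin` over `ℚ`. -/
noncomputable def formalSin : PowerSeries ℚ :=
  PowerSeries.mk fun n => if n % 2 = 1 then (-1 : ℚ) ^ (n / 2) / n.factorial else 0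

/-- The formal power series of `cos` over `ℚ`. -/
noncomputable def formalCos : PowerSeries ℚ :=
  PowerSeries.mk fun n => if n % 2 = 0 then (-1 : ℚ) ^ (n / 2) / n.factorial else 0

/-- The formal power series of `tan` over `ℚ`. -/
noncomputable def formalTan : PowerSeries ℚ := formalSin * formalCos⁻¹

/-- The `n`-th tangent number `T_n`, defined by
`tan x = ∑_{n ≥ 1} T_n x^{2n-1}/(2n-1)!`. -/
noncomputable def tangentNumber (n : ℕ) : ℚ :=
  (2 * n - 1).factorial * PowerSeries.coeff (R := ℚ) (2 * n - 1) formalTan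

open Finset

lemma constCos : PowerSeries.constantCoeff (R := ℚ) formalCos = 1 := by
  simp [formalCos, ← PowerSeries.coeff_zero_eq_constantCoeff]

lemma cos_mul_inv : formalCos * formalCos⁻¹ = 1 :=
  PowerSeries.mul_inv_cancel _ (by rw [constCos]; norm_num)

lemma tan_mul_cos : formalTan * formalCos = formalSin := by
  rw [formalTan, mul_assoc, mul_comm formalCos⁻¹, cos_mul_inv, mul_one]

lemma rescale_sin : PowerSeries.rescale (-1 : ℚ) formalSin = -formalSin := by
  ext n
  simp only [PowerSeries.coeff_rescale, formalSin, PowerSeries.coeff_mk, map_neg]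
  rcases Nat.even_or_odd n with h | h
  · simp [Nat.even_iff.mp h]
  · simp only [Nat.odd_iff.mp h, if_pos, h.neg_one_pow]; ring

lemma rescale_cos : PowerSeries.rescale (-1 : ℚ) formalCos = formalCos := by
  ext n
  simp only [PowerSeries.coeff_rescale, formalCos, PowerSeries.coeff_mk]
  rcases Nat.even_or_odd n with h | h
  · simp only [Nat.even_iff.mp h, if_pos, h.neg_one_pow, one_mul]
  · simp [Nat.odd_iff.mp h]

lemma rescale_cos_inv : PowerSeries.rescale (-1 : ℚ) formalCos⁻¹ = formalCos⁻¹ := by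
  have h := congrArg (PowerSeries.rescale (-1 : ℚ)) cos_mul_inv
  rw [map_mul, map_one, rescale_cos] at h
  have hne : formalCos ≠ 0 := by
    intro h0
    have := constCos
    rw [h0, map_zero] at this
    exact one_ne_zero this.symm
  exact mul_left_cancel₀ hne (h.trans cos_mul_inv.symm)

lemma coeff_tan_even (m : ℕ) : PowerSeries.coeff (R := ℚ) (2 * m) formalTan = 0 := by
  have h : PowerSeries.rescale (-1 : ℚ) formalTan = -formalTan := by
    rw [formalTan, map_mul, rescale_sin, rescale_cos_inv, neg_mul]
  have := congrArg (PowerSeries.coeff (R := ℚ) (2 * m)) h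
  rw [PowerSeries.coeff_rescale, map_neg] at this
  have hpow : (-1 : ℚ) ^ (2 * m) = 1 := by simp [pow_mul]
  rw [hpow, one_mul] at this
  linarith


lemma coeff_cos_even (m : ℕ) :
    PowerSeries.coeff (R := ℚ) (2 * m) formalCos = (-1) ^ m / (2 * m).factorial := by
  have h1 : (2 * m) % 2 = 0 := by omega
  have h2 : (2 * m) / 2 = m := by omega
  simp [formalCos, h1, h2]

lemma coeff_sin_odd (m : ℕ) :
    PowerSeries.coeff (R := ℚ) (2 * m + 1) formalSin = (-1) ^ m / (2 * m + 1).factorial := by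
  have h1 : (2 * m + 1) % 2 = 1 := by omega
  have h2 : (2 * m + 1) / 2 = m := by omega
  simp [formalSin, h1, h2]

lemma coeff_tan_odd (k : ℕ) :
    PowerSeries.coeff (R := ℚ) (2 * k - 1) formalTan = tangentNumber k / (2 * k - 1).factorial := by
  rw [tangentNumber]
  have : ((2 * k - 1).factorial : ℚ) ≠ 0 := by exact_mod_cast (2 * k - 1).factorial_ne_zero
  field_simp

lemma key (n : ℕ) (hn : 1 ≤ n) :
    ∑ k ∈ Icc 1 n, (Nat.choose (2 * n - 1) (2 * k - 1) : ℚ) * ((-1) ^ k * tangentNumber k)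
      = -1 := by
  have h := congrArg (PowerSeries.coeff (R := ℚ) (2 * n - 1)) tan_mul_cos
  rw [PowerSeries.coeff_mul, Finset.Nat.sum_antidiagonal_eq_sum_range_succ_mk] at h
  -- restrict to odd indices
  have hsub : (Icc 1 n).image (fun k => 2 * k - 1) ⊆ Finset.range (2 * n - 1 + 1) := by
    intro i hi
    simp only [Finset.mem_image, Finset.mem_Icc] at hi
    obtain ⟨k, hk, rfl⟩ := hi
    simp only [Finset.mem_range]; omega
  have hzero : ∀ i ∈ Finset.range (2 * n - 1 + 1),
      i ∉ (Icc 1 n).image (fun k => 2 * k - 1) →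
      PowerSeries.coeff (R := ℚ) i formalTan * PowerSeries.coeff (R := ℚ) (2 * n - 1 - i) formalCos = 0 := by
    intro i hi hni
    simp only [Finset.mem_range] at hi
    rcases Nat.even_or_odd i with he | ho
    · obtain ⟨m, hm⟩ := he
      have : i = 2 * m := by omega
      rw [this, coeff_tan_even, zero_mul]
    · exfalso; apply hni
      obtain ⟨m, hm⟩ := ho
      simp only [Finset.mem_image, Finset.mem_Icc]
      exact ⟨m + 1, by omega, by omega⟩
  rw [← Finset.sum_subset hsub hzero,
    Finset.sum_image (by intro x hx y hy hxy; simp only [Finset.coe_Icc, Set.mem_Icc, Finset.mem_coe, Finset.mem_Icc] at hx hy; simp only [] at hxy; omega)] at h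
  have hsin : PowerSeries.coeff (R := ℚ) (2 * n - 1) formalSin = (-1) ^ (n - 1) / (2 * n - 1).factorial := by
    have h1 : (2 * n - 1) % 2 = 1 := by omega
    have h2 : (2 * n - 1) / 2 = n - 1 := by omega
    simp [formalSin, h1, h2]
  rw [hsin] at h
  -- rewrite each term
  have hterm : ∀ k ∈ Icc 1 n,
      PowerSeries.coeff (R := ℚ) (2 * k - 1) formalTan *
        PowerSeries.coeff (R := ℚ) (2 * n - 1 - (2 * k - 1)) formalCos
      = tangentNumber k / (2 * k - 1).factorial * ((-1) ^ (n - k) / (2 * (n - k)).factorial) := by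
    intro k hk
    simp only [Finset.mem_Icc] at hk
    have h2 : 2 * n - 1 - (2 * k - 1) = 2 * (n - k) := by omega
    rw [coeff_tan_odd, h2, coeff_cos_even]
  rw [Finset.sum_congr rfl hterm] at h
  -- multiply through
  have hgoal : ∀ k ∈ Icc 1 n,
      (Nat.choose (2 * n - 1) (2 * k - 1) : ℚ) * ((-1) ^ k * tangentNumber k)
      = ((-1) ^ n * (2 * n - 1).factorial) *
        (tangentNumber k / (2 * k - 1).factorial * ((-1) ^ (n - k) / (2 * (n - k)).factorial)) := by
    intro k hk
    simp only [Finset.mem_Icc] at hk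
    have hle : 2 * k - 1 ≤ 2 * n - 1 := by omega
    rw [Nat.cast_choose ℚ hle]
    have h2 : 2 * n - 1 - (2 * k - 1) = 2 * (n - k) := by omega
    rw [h2]
    have hsign : (-1 : ℚ) ^ n * (-1) ^ (n - k) = (-1) ^ k := by
      rw [← pow_add]
      have he : n + (n - k) = k + 2 * (n - k) := by omega
      rw [he, pow_add, pow_mul]; norm_num
    have f1 : ((2 * k - 1).factorial : ℚ) ≠ 0 := by exact_mod_cast Nat.factorial_ne_zero _
    have f2 : ((2 * (n - k)).factorial : ℚ) ≠ 0 := by exact_mod_cast Nat.factorial_ne_zero _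
    have f3 : ((2 * n - 1).factorial : ℚ) ≠ 0 := by exact_mod_cast Nat.factorial_ne_zero _
    field_simp
    rw [← hsign]; ring
  rw [Finset.sum_congr rfl hgoal, ← Finset.mul_sum, h]
  have f3 : ((2 * n - 1).factorial : ℚ) ≠ 0 := by exact_mod_cast Nat.factorial_ne_zero _
  have hsign : (-1 : ℚ) ^ n * (-1) ^ (n - 1) = -1 := by
    rw [← pow_add]
    have he : n + (n - 1) = 1 + 2 * (n - 1) := by omega
    rw [he, pow_add, pow_mul]; norm_num
  have hre : (-1 : ℚ) ^ n * ((2 * n - 1).factorial : ℚ) *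
      ((-1) ^ (n - 1) / ((2 * n - 1).factorial : ℚ))
      = (-1) ^ n * (-1) ^ (n - 1) *
        (((2 * n - 1).factorial : ℚ) / ((2 * n - 1).factorial : ℚ)) := by ring
  rw [hre, div_self f3, mul_one, hsign]


/- If `s 1 = -1` and `1 + ∑_{k=1}^n C(2n-1, 2k-1) s k = 0` for all `n ≥ 1`, then
`s k = (-1)^k T_k` for all `k ≥ 1`, where `T_k` is the `k`-th tangent number. -/
theorem s_eq_neg_one_pow_mul_tangentNumber (s : ℕ → ℚ) (hs1 : s 1 = -1)
    (hrec : ∀ n : ℕ, 1 ≤ n →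
      1 + ∑ k ∈ Icc 1 n, (Nat.choose (2 * n - 1) (2 * k - 1) : ℚ) * s k = 0) :
    ∀ k : ℕ, 1 ≤ k → s k = (-1) ^ k * tangentNumber k := by
  intro k
  induction k using Nat.strong_induction_on with
  | _ k ih =>
    intro hk
    obtain ⟨m, rfl⟩ : ∃ m, k = m + 1 := ⟨k - 1, by omega⟩
    have h1 := hrec (m + 1) (by omega)
    have h2 := key (m + 1) (by omega)
    have hsum : ∑ j ∈ Icc 1 (m + 1), (Nat.choose (2 * (m + 1) - 1) (2 * j - 1) : ℚ) * s j
        = ∑ j ∈ Icc 1 (m + 1),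
            (Nat.choose (2 * (m + 1) - 1) (2 * j - 1) : ℚ) * ((-1) ^ j * tangentNumber j) := by
      linarith
    rw [Finset.sum_Icc_succ_top (by omega), Finset.sum_Icc_succ_top (by omega)] at hsum
    have heq : ∑ j ∈ Icc 1 m, (Nat.choose (2 * (m + 1) - 1) (2 * j - 1) : ℚ) * s j
        = ∑ j ∈ Icc 1 m,
            (Nat.choose (2 * (m + 1) - 1) (2 * j - 1) : ℚ) * ((-1) ^ j * tangentNumber j) := by
      refine Finset.sum_congr rfl fun j hj => ?_
      simp only [Finset.mem_Icc] at hj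
      rw [ih j (by omega) (by omega)]
    have hself : (Nat.choose (2 * (m + 1) - 1) (2 * (m + 1) - 1) : ℚ) = 1 := by
      rw [Nat.choose_self]; norm_num
    rw [hself] at hsum
    linarith
end

section
/- Let n > 1 be even and ζ a primitive n-th root of unity. Then Σ over all derangements τ of {1,...,n} of Π_{j=1}^n 1/(1 - ζ^{j-τ(j)}) = ((n-1)!!)^2 / 2^n. -/
open Equiv Finset

namespace SumDerangementsAux

variable {n : ℕ}

theorem perm_apply_inv_self {α : Type*} (f : Perm α) (x : α) : f (f⁻¹ x) = x :=
  f.apply_symm_apply x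

theorem perm_inv_apply_self {α : Type*} (f : Perm α) (x : α) : f⁻¹ (f x) = x :=
  f.symm_apply_apply x

/-- arc weight `1/(1 - ζ^(j-k))` -/
noncomputable def fw (ζ : ℂ) (j k : Fin n) : ℂ := (1 - ζ ^ ((j : ℤ) - (k : ℤ)))⁻¹

/-- weighted sum over permutations with support `S`, with character `χ` -/
noncomputable def ES (ζ : ℂ) (χ : Perm (Fin n) → ℂ) (S : Finset (Fin n)) : ℂ :=
  ∑ τ ∈ univ.filter (fun τ : Perm (Fin n) => τ.support = S), χ τ * ∏ j ∈ S, fw ζ j (τ j)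

section Basic

variable {ζ : ℂ} (hn : 1 < n) (hζ : IsPrimitiveRoot ζ n)
include hn hζ

theorem zeta_ne_zero : ζ ≠ 0 := hζ.ne_zero (by omega)

omit hn in
theorem zpow_ne_one {j k : Fin n} (h : j ≠ k) : ζ ^ ((j : ℤ) - (k : ℤ)) ≠ 1 := by
  intro hone
  rw [hζ.zpow_eq_one_iff_dvd] at hone
  have h1 : ((j : ℤ) - (k : ℤ)) = 0 := by
    refine Int.eq_zero_of_dvd_of_natAbs_lt_natAbs hone ?_
    have hj := j.isLt; have hk := k.isLt
    rw [Int.natAbs_natCast]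
    omega
  exact h (Fin.ext (by omega))

theorem fw_add_fw {j k : Fin n} (h : j ≠ k) : fw ζ j k + fw ζ k j = 1 := by
  have h1 : ζ ^ ((j : ℤ) - (k : ℤ)) ≠ 1 := zpow_ne_one hζ h
  have h2 : ζ ^ ((k : ℤ) - (j : ℤ)) ≠ 1 := zpow_ne_one hζ h.symm
  have hz := zeta_ne_zero hn hζ
  have hinv : ζ ^ ((k : ℤ) - (j : ℤ)) = (ζ ^ ((j : ℤ) - (k : ℤ)))⁻¹ := by
    rw [← zpow_neg]; ring_nf
  set u := ζ ^ ((j : ℤ) - (k : ℤ)) with hu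
  have hu0 : u ≠ 0 := zpow_ne_zero _ hz
  have h1' : 1 - u ≠ 0 := fun hc => h1 (by linear_combination -hc)
  have h2' : 1 - u⁻¹ ≠ 0 := by
    rw [hinv] at h2; exact fun hc => h2 (by linear_combination -hc)
  have h4' : u - 1 ≠ 0 := sub_ne_zero.mpr h1
  rw [fw, fw, ← hu, hinv]
  have e2 : (1 - u⁻¹) = (u - 1) / u := by field_simp
  rw [e2, inv_div]
  field_simp
  ring

theorem fw_contract {p t q : Fin n} (h1 : p ≠ t) (h2 : t ≠ q) (h3 : p ≠ q) :
    fw ζ p t * fw ζ t q = fw ζ p q * (fw ζ p t + fw ζ t q - 1) := by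
  have hz := zeta_ne_zero hn hζ
  have hu : ζ ^ ((p : ℤ) - (t : ℤ)) ≠ 1 := zpow_ne_one hζ h1
  have hv : ζ ^ ((t : ℤ) - (q : ℤ)) ≠ 1 := zpow_ne_one hζ h2
  have hw : ζ ^ ((p : ℤ) - (q : ℤ)) ≠ 1 := zpow_ne_one hζ h3
  have hmul : ζ ^ ((p : ℤ) - (q : ℤ)) = ζ ^ ((p : ℤ) - (t : ℤ)) * ζ ^ ((t : ℤ) - (q : ℤ)) := by
    rw [← zpow_add₀ hz]; ring_nf
  set u := ζ ^ ((p : ℤ) - (t : ℤ))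
  set v := ζ ^ ((t : ℤ) - (q : ℤ))
  rw [fw, fw, fw, hmul]
  have h1' : 1 - u ≠ 0 := fun hc => hu (by linear_combination -hc)
  have h2' : 1 - v ≠ 0 := fun hc => hv (by linear_combination -hc)
  have h3' : 1 - u * v ≠ 0 := by
    rw [hmul] at hw; exact fun hc => hw (by linear_combination -hc)
  change (1 - u)⁻¹ * (1 - v)⁻¹ = (1 - u * v)⁻¹ * ((1 - u)⁻¹ + (1 - v)⁻¹ - 1)
  have key : (1 - u)⁻¹ + (1 - v)⁻¹ - 1 = (1 - u * v) * ((1 - u)⁻¹ * (1 - v)⁻¹) := by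
    field_simp
    ring
  rw [key, ← mul_assoc, inv_mul_cancel₀ h3', one_mul]

end Basic

section Recursion

variable {ζ : ℂ} (hn : 1 < n) (hζ : IsPrimitiveRoot ζ n)

theorem support_eq_of (τ : Perm (Fin n)) (S : Finset (Fin n))
    (h1 : ∀ x, x ∈ S → τ x ≠ x) (h2 : ∀ x, x ∉ S → τ x = x) : τ.support = S := by
  ext x
  rw [Equiv.Perm.mem_support]
  constructor
  · intro hx; by_contra hxs; exact hx (h2 x hxs)
  · exact h1 x

theorem not_mem_support_apply_eq {τ : Perm (Fin n)} {S : Finset (Fin n)} {x : Fin n}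
    (hτ : τ.support = S) (hx : x ∉ S) : τ x = x := by
  by_contra hc
  exact hx (hτ ▸ Equiv.Perm.mem_support.2 hc)

theorem mem_support_of {τ : Perm (Fin n)} {S : Finset (Fin n)} {x : Fin n}
    (hτ : τ.support = S) (hx : x ∈ S) : τ x ≠ x := by
  refine Equiv.Perm.mem_support.1 ?_
  rw [hτ]; exact hx

include hn hζ in
/-- the master recursion for `ES` -/
theorem ES_rec (χ : Perm (Fin n) → ℂ) (ε : ℂ)
    (hχ : ∀ (τ : Perm (Fin n)) (a b : Fin n), a ≠ b → χ (τ * Equiv.swap a b) = ε * χ τ)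
    {S : Finset (Fin n)} {t : Fin n} (ht : t ∈ S) :
    ES ζ χ S = ε * ∑ p ∈ S.erase t, fw ζ t p * fw ζ p t * ES ζ χ ((S.erase t).erase p) := by
  classical
  have key : ∀ τ : Perm (Fin n), τ.support = S → τ t ≠ t := fun τ hτ => mem_support_of hτ ht
  rw [ES, ← Finset.sum_filter_add_sum_filter_not
      (univ.filter fun τ : Perm (Fin n) => τ.support = S) (fun τ => τ (τ t) = t),
      Finset.filter_filter, Finset.filter_filter]
  have hB : (∑ τ ∈ univ.filter fun τ : Perm (Fin n) => τ.support = S ∧ ¬ τ (τ t) = t,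
      χ τ * ∏ j ∈ S, fw ζ j (τ j)) = 0 := by
    have step0 : (∑ τ ∈ univ.filter fun τ : Perm (Fin n) => τ.support = S ∧ ¬ τ (τ t) = t,
        χ τ * ∏ j ∈ S, fw ζ j (τ j))
        = ∑ x ∈ (S.erase t) ×ˢ (univ.filter fun ρ : Perm (Fin n) => ρ.support = S.erase t),
            ε * χ x.2 * (fw ζ x.1 t * fw ζ t (x.2 x.1) *
              ∏ j ∈ (S.erase t).erase x.1, fw ζ j (x.2 j)) := by
      refine Finset.sum_nbij' (fun τ => (τ⁻¹ t, τ * Equiv.swap (τ⁻¹ t) t))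
          (fun x => x.2 * Equiv.swap x.1 t) ?_ ?_ ?_ ?_ ?_
      · -- forward membership
        intro τ hτ
        rw [Finset.mem_filter] at hτ
        obtain ⟨-, hsupp, hB2⟩ := hτ
        have htt : τ t ≠ t := key τ hsupp
        have hpt : τ⁻¹ t ≠ t := by
          intro hc
          apply htt
          have h2 := congrArg τ hc
          rw [(perm_apply_inv_self τ)] at h2
          exact h2.symm
        have hptS : τ⁻¹ t ∈ S := by
          rw [← hsupp, Equiv.Perm.mem_support, (perm_apply_inv_self τ)]
          exact fun hc => hpt hc.symm
        have hne : τ t ≠ τ⁻¹ t := fun hc => hB2 (by rw [hc, (perm_apply_inv_self τ)])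
        rw [Finset.mem_product]
        refine ⟨Finset.mem_erase.2 ⟨hpt, hptS⟩, ?_⟩
        rw [Finset.mem_filter]
        refine ⟨Finset.mem_univ _, support_eq_of _ _ ?_ ?_⟩
        · intro x hx
          rw [Finset.mem_erase] at hx
          obtain ⟨hxt, hxS⟩ := hx
          by_cases hxp : x = τ⁻¹ t
          · rw [hxp, Equiv.Perm.mul_apply, Equiv.swap_apply_left]
            exact hne
          · rw [Equiv.Perm.mul_apply, Equiv.swap_apply_of_ne_of_ne hxp hxt]
            exact mem_support_of hsupp hxS
        · intro x hx
          by_cases hxt : x = t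
          · rw [hxt, Equiv.Perm.mul_apply, Equiv.swap_apply_right]
            exact (perm_apply_inv_self τ) t
          · have hxS : x ∉ S := fun hc => hx (Finset.mem_erase.2 ⟨hxt, hc⟩)
            have hxp : x ≠ τ⁻¹ t := fun hc => hxS (hc ▸ hptS)
            rw [Equiv.Perm.mul_apply, Equiv.swap_apply_of_ne_of_ne hxp hxt]
            exact not_mem_support_apply_eq hsupp hxS
      · -- backward membership
        rintro ⟨p, ρ⟩ hx
        rw [Finset.mem_product, Finset.mem_erase, Finset.mem_filter] at hx
        obtain ⟨⟨hpt, hpS⟩, -, hsupp⟩ := hx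
        simp only at hpt hpS hsupp ⊢
        have hpsupp : p ∈ S.erase t := Finset.mem_erase.2 ⟨hpt, hpS⟩
        have hρp : ρ p ∈ S.erase t := by
          rw [← hsupp, Equiv.Perm.apply_mem_support, hsupp]
          exact hpsupp
        have hρpp : ρ p ≠ p := mem_support_of hsupp hpsupp
        have hρpt : ρ p ≠ t := (Finset.mem_erase.1 hρp).1
        have hρt : ρ t = t := not_mem_support_apply_eq hsupp (by simp)
        have happ_t : (ρ * Equiv.swap p t) t = ρ p := by
          rw [Equiv.Perm.mul_apply, Equiv.swap_apply_right]
        have happ_p : (ρ * Equiv.swap p t) p = t := by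
          rw [Equiv.Perm.mul_apply, Equiv.swap_apply_left, hρt]
        rw [Finset.mem_filter]
        refine ⟨Finset.mem_univ _, ?_, ?_⟩
        · refine support_eq_of _ _ ?_ ?_
          · intro y hy
            by_cases hyt : y = t
            · rw [hyt, happ_t]; exact hρpt
            · by_cases hyp : y = p
              · rw [hyp, happ_p]; exact fun hc => hpt hc.symm
              · rw [Equiv.Perm.mul_apply, Equiv.swap_apply_of_ne_of_ne hyp hyt]
                exact mem_support_of hsupp (Finset.mem_erase.2 ⟨hyt, hy⟩)
          · intro y hy
            have hyt : y ≠ t := fun hc => hy (hc ▸ ht)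
            have hyp : y ≠ p := fun hc => hy (hc ▸ hpS)
            rw [Equiv.Perm.mul_apply, Equiv.swap_apply_of_ne_of_ne hyp hyt]
            refine not_mem_support_apply_eq hsupp ?_
            intro hc
            exact hy (Finset.mem_of_mem_erase hc)
        · -- the no-2-cycle condition
          rw [happ_t, Equiv.Perm.mul_apply, Equiv.swap_apply_of_ne_of_ne hρpp hρpt]
          intro hc
          have hmem : ρ (ρ p) ∈ S.erase t := by
            rw [← hsupp, Equiv.Perm.apply_mem_support, Equiv.Perm.apply_mem_support, hsupp]
            exact hpsupp
          rw [hc] at hmem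
          exact (Finset.mem_erase.1 hmem).1 rfl
      · -- left inverse
        intro τ hτ
        simp only
        rw [mul_assoc, Equiv.swap_mul_self, mul_one]
      · -- right inverse
        rintro ⟨p, ρ⟩ hx
        rw [Finset.mem_product, Finset.mem_erase, Finset.mem_filter] at hx
        obtain ⟨⟨hpt, hpS⟩, -, hsupp⟩ := hx
        simp only at hpt hpS hsupp ⊢
        have hρt : ρ t = t := not_mem_support_apply_eq hsupp (by simp)
        have happ_p : (ρ * Equiv.swap p t) p = t := by
          rw [Equiv.Perm.mul_apply, Equiv.swap_apply_left, hρt]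
        have hinv : (ρ * Equiv.swap p t)⁻¹ t = p := by
          apply Equiv.injective (ρ * Equiv.swap p t)
          rw [perm_apply_inv_self, happ_p]
        rw [Prod.mk.injEq]
        refine ⟨hinv, ?_⟩
        rw [hinv, mul_assoc, Equiv.swap_mul_self, mul_one]
      · -- weights agree
        intro τ hτ
        rw [Finset.mem_filter] at hτ
        obtain ⟨-, hsupp, hB2⟩ := hτ
        have htt : τ t ≠ t := key τ hsupp
        have hpt : τ⁻¹ t ≠ t := by
          intro hc
          apply htt
          have h2 := congrArg τ hc
          rw [(perm_apply_inv_self τ)] at h2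
          exact h2.symm
        have hptS : τ⁻¹ t ∈ S := by
          rw [← hsupp, Equiv.Perm.mem_support, (perm_apply_inv_self τ)]
          exact fun hc => hpt hc.symm
        set p := τ⁻¹ t with hp
        set ρ := τ * Equiv.swap p t with hρdef
        have hback : ρ * Equiv.swap p t = τ := by
          rw [hρdef, mul_assoc, Equiv.swap_mul_self, mul_one]
        have hχτ : χ τ = ε * χ ρ := by rw [← hback, hχ ρ p t hpt]
        have hρp : ρ p = τ t := by
          rw [hρdef, Equiv.Perm.mul_apply, Equiv.swap_apply_left]
        have hτp : τ p = t := (perm_apply_inv_self τ) t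
        simp only
        have hsplit : ∏ j ∈ S, fw ζ j (τ j)
            = fw ζ t (τ t) * (fw ζ p (τ p) * ∏ j ∈ (S.erase t).erase p, fw ζ j (τ j)) := by
          rw [Finset.mul_prod_erase (S.erase t) (fun j => fw ζ j (τ j))
            (Finset.mem_erase.2 ⟨hpt, hptS⟩)]
          rw [Finset.mul_prod_erase S (fun j => fw ζ j (τ j)) ht]
        have hrest : ∏ j ∈ (S.erase t).erase p, fw ζ j (τ j)
            = ∏ j ∈ (S.erase t).erase p, fw ζ j (ρ j) := by
          refine Finset.prod_congr rfl fun j hj => ?_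
          rw [Finset.mem_erase, Finset.mem_erase] at hj
          rw [hρdef, Equiv.Perm.mul_apply, Equiv.swap_apply_of_ne_of_ne hj.1 hj.2.1]
        rw [hsplit, hrest, hχτ, hτp, ← hρp]
        ring
    rw [step0, Finset.sum_product_right]
    refine Finset.sum_eq_zero fun ρ hρ => ?_
    rw [Finset.mem_filter] at hρ
    obtain ⟨-, hsupp⟩ := hρ
    have hterm : ∀ p ∈ S.erase t,
        ε * χ ρ * (fw ζ p t * fw ζ t (ρ p) * ∏ j ∈ (S.erase t).erase p, fw ζ j (ρ j))
        = (ε * χ ρ * ∏ j ∈ S.erase t, fw ζ j (ρ j)) * (fw ζ p t + fw ζ t (ρ p) - 1) := by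
      intro p hp
      have hpt : p ≠ t := (Finset.mem_erase.1 hp).1
      have hρp_mem : ρ p ∈ S.erase t := by
        rw [← hsupp, Equiv.Perm.apply_mem_support, hsupp]; exact hp
      have htρp : t ≠ ρ p := fun hc => (Finset.mem_erase.1 hρp_mem).1 hc.symm
      have hpρp : p ≠ ρ p := fun hc => (mem_support_of hsupp hp) hc.symm
      have hcontract := fw_contract hn hζ hpt htρp hpρp
      have hfull : fw ζ p (ρ p) * ∏ j ∈ (S.erase t).erase p, fw ζ j (ρ j)
          = ∏ j ∈ S.erase t, fw ζ j (ρ j) :=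
        Finset.mul_prod_erase (S.erase t) (fun j => fw ζ j (ρ j)) hp
      calc ε * χ ρ * (fw ζ p t * fw ζ t (ρ p) * ∏ j ∈ (S.erase t).erase p, fw ζ j (ρ j))
          = ε * χ ρ * (fw ζ p (ρ p) * ∏ j ∈ (S.erase t).erase p, fw ζ j (ρ j))
            * (fw ζ p t + fw ζ t (ρ p) - 1) := by rw [hcontract]; ring
        _ = (ε * χ ρ * ∏ j ∈ S.erase t, fw ζ j (ρ j)) * (fw ζ p t + fw ζ t (ρ p) - 1) := by
            rw [hfull]
    rw [Finset.sum_congr rfl hterm, ← Finset.mul_sum]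
    have hzero : ∑ p ∈ S.erase t, (fw ζ p t + fw ζ t (ρ p) - 1) = 0 := by
      have hreindex : ∑ p ∈ S.erase t, fw ζ t (ρ p) = ∑ p ∈ S.erase t, fw ζ t p := by
        refine Finset.sum_nbij' (fun p => ρ p) (fun q => ρ⁻¹ q) ?_ ?_ ?_ ?_ ?_
        · intro p hp; rw [← hsupp, Equiv.Perm.apply_mem_support, hsupp]; exact hp
        · intro q hq
          rw [← hsupp, ← Equiv.Perm.apply_mem_support, (perm_apply_inv_self ρ), hsupp]
          exact hq
        · intro p _; exact (perm_inv_apply_self ρ) p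
        · intro q _; exact (perm_apply_inv_self ρ) q
        · intro p _; rfl
      have hsplit : ∑ p ∈ S.erase t, (fw ζ p t + fw ζ t (ρ p) - 1)
          = (∑ p ∈ S.erase t, (fw ζ p t + fw ζ t (ρ p))) - ∑ p ∈ S.erase t, (1:ℂ) :=
        Finset.sum_sub_distrib _ _
      rw [hsplit, Finset.sum_add_distrib, hreindex, ← Finset.sum_add_distrib]
      have hone : ∀ p ∈ S.erase t, fw ζ p t + fw ζ t p = 1 := fun p hp =>
        fw_add_fw hn hζ (Finset.mem_erase.1 hp).1
      rw [Finset.sum_congr rfl hone]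
      simp
    rw [hzero, mul_zero]
  have hA : (∑ τ ∈ univ.filter fun τ : Perm (Fin n) => τ.support = S ∧ τ (τ t) = t,
      χ τ * ∏ j ∈ S, fw ζ j (τ j))
      = ε * ∑ p ∈ S.erase t, fw ζ t p * fw ζ p t * ES ζ χ ((S.erase t).erase p) := by
    rw [Finset.mul_sum]
    have step1 : ∀ p ∈ S.erase t,
        ε * (fw ζ t p * fw ζ p t * ES ζ χ ((S.erase t).erase p))
        = ∑ ρ ∈ univ.filter fun ρ : Perm (Fin n) => ρ.support = (S.erase t).erase p,
            ε * χ ρ * (fw ζ t p * fw ζ p t * ∏ j ∈ (S.erase t).erase p, fw ζ j (ρ j)) := by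
      intro p hp
      rw [ES, Finset.mul_sum, Finset.mul_sum]
      exact Finset.sum_congr rfl fun ρ _ => by ring
    rw [Finset.sum_congr rfl step1, Finset.sum_sigma']
    refine Finset.sum_nbij' (fun τ => ⟨τ t, τ * Equiv.swap (τ t) t⟩)
        (fun x => x.2 * Equiv.swap x.1 t) ?_ ?_ ?_ ?_ ?_
    · -- forward membership
      intro τ hτ
      rw [Finset.mem_filter] at hτ
      obtain ⟨-, hsupp, hA2⟩ := hτ
      have htt : τ t ≠ t := key τ hsupp
      have hτtS : τ t ∈ S := by
        rw [← hsupp, Equiv.Perm.mem_support, hA2]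
        exact fun hc => htt hc.symm
      rw [Finset.mem_sigma]
      refine ⟨Finset.mem_erase.2 ⟨htt, hτtS⟩, ?_⟩
      rw [Finset.mem_filter]
      refine ⟨Finset.mem_univ _, support_eq_of _ _ ?_ ?_⟩
      · intro x hx
        rw [Finset.mem_erase, Finset.mem_erase] at hx
        obtain ⟨hxp, hxt, hxS⟩ := hx
        rw [Equiv.Perm.mul_apply, Equiv.swap_apply_of_ne_of_ne hxp hxt]
        exact mem_support_of hsupp hxS
      · intro x hx
        by_cases hxt : x = t
        · rw [hxt, Equiv.Perm.mul_apply, Equiv.swap_apply_right]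
          exact hA2
        · by_cases hxp : x = τ t
          · rw [hxp, Equiv.Perm.mul_apply, Equiv.swap_apply_left]
          · have hxS : x ∉ S := fun hc => hx (Finset.mem_erase.2 ⟨hxp,
              Finset.mem_erase.2 ⟨hxt, hc⟩⟩)
            rw [Equiv.Perm.mul_apply, Equiv.swap_apply_of_ne_of_ne hxp hxt]
            exact not_mem_support_apply_eq hsupp hxS
    · -- backward membership
      rintro ⟨p, ρ⟩ hx
      rw [Finset.mem_sigma, Finset.mem_erase, Finset.mem_filter] at hx
      obtain ⟨⟨hpt, hpS⟩, -, hsupp⟩ := hx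
      simp only at hpt hpS hsupp ⊢
      have hρp : ρ p = p := not_mem_support_apply_eq hsupp (by simp)
      have hρt : ρ t = t := not_mem_support_apply_eq hsupp
        (fun hc => (Finset.mem_erase.1 (Finset.mem_of_mem_erase hc)).1 rfl)
      have happ_t : (ρ * Equiv.swap p t) t = p := by
        rw [Equiv.Perm.mul_apply, Equiv.swap_apply_right, hρp]
      have happ_p : (ρ * Equiv.swap p t) p = t := by
        rw [Equiv.Perm.mul_apply, Equiv.swap_apply_left, hρt]
      rw [Finset.mem_filter]
      refine ⟨Finset.mem_univ _, support_eq_of _ _ ?_ ?_, ?_⟩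
      · intro y hy
        by_cases hyt : y = t
        · rw [hyt, happ_t]; exact hpt
        · by_cases hyp : y = p
          · rw [hyp, happ_p]; exact fun hc => hpt hc.symm
          · rw [Equiv.Perm.mul_apply, Equiv.swap_apply_of_ne_of_ne hyp hyt]
            exact mem_support_of hsupp (Finset.mem_erase.2 ⟨hyp,
              Finset.mem_erase.2 ⟨hyt, hy⟩⟩)
      · intro y hy
        have hyt : y ≠ t := fun hc => hy (hc ▸ ht)
        have hyp : y ≠ p := fun hc => hy (hc ▸ hpS)
        rw [Equiv.Perm.mul_apply, Equiv.swap_apply_of_ne_of_ne hyp hyt]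
        refine not_mem_support_apply_eq hsupp ?_
        intro hc
        exact hy (Finset.mem_of_mem_erase (Finset.mem_of_mem_erase hc))
      · rw [happ_t, happ_p]
    · -- left inverse
      intro τ hτ
      simp only
      rw [mul_assoc, Equiv.swap_mul_self, mul_one]
    · -- right inverse
      rintro ⟨p, ρ⟩ hx
      rw [Finset.mem_sigma, Finset.mem_erase, Finset.mem_filter] at hx
      obtain ⟨⟨hpt, hpS⟩, -, hsupp⟩ := hx
      simp only at hpt hpS hsupp ⊢
      have hρp : ρ p = p := not_mem_support_apply_eq hsupp (by simp)
      have happ_t : (ρ * Equiv.swap p t) t = p := by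
        rw [Equiv.Perm.mul_apply, Equiv.swap_apply_right, hρp]
      refine Sigma.ext happ_t (heq_of_eq ?_)
      rw [happ_t, mul_assoc, Equiv.swap_mul_self, mul_one]
    · -- weights agree
      intro τ hτ
      rw [Finset.mem_filter] at hτ
      obtain ⟨-, hsupp, hA2⟩ := hτ
      have htt : τ t ≠ t := key τ hsupp
      have hτtS : τ t ∈ S := by
        rw [← hsupp, Equiv.Perm.mem_support, hA2]
        exact fun hc => htt hc.symm
      set p := τ t with hp
      set ρ := τ * Equiv.swap p t with hρdef
      have hback : ρ * Equiv.swap p t = τ := by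
        rw [hρdef, mul_assoc, Equiv.swap_mul_self, mul_one]
      have hχτ : χ τ = ε * χ ρ := by rw [← hback, hχ ρ p t htt]
      have hτp : τ p = t := hA2
      simp only
      have hsplit : ∏ j ∈ S, fw ζ j (τ j)
          = fw ζ t (τ t) * (fw ζ p (τ p) * ∏ j ∈ (S.erase t).erase p, fw ζ j (τ j)) := by
        rw [Finset.mul_prod_erase (S.erase t) (fun j => fw ζ j (τ j))
          (Finset.mem_erase.2 ⟨htt, hτtS⟩)]
        rw [Finset.mul_prod_erase S (fun j => fw ζ j (τ j)) ht]
      have hrest : ∏ j ∈ (S.erase t).erase p, fw ζ j (τ j)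
          = ∏ j ∈ (S.erase t).erase p, fw ζ j (ρ j) := by
        refine Finset.prod_congr rfl fun j hj => ?_
        rw [Finset.mem_erase, Finset.mem_erase] at hj
        rw [hρdef, Equiv.Perm.mul_apply, Equiv.swap_apply_of_ne_of_ne hj.1 hj.2.1]
      rw [hsplit, hrest, hχτ, hτp]
      ring
  rw [hA, hB, add_zero]

theorem ES_empty {ζ : ℂ} (χ : Perm (Fin n) → ℂ) (hχ1 : χ 1 = 1) : ES ζ χ ∅ = 1 := by
  rw [ES]
  have h1 : (univ.filter fun τ : Perm (Fin n) => τ.support = ∅) = {1} := by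
    ext τ
    simp [Equiv.Perm.support_eq_empty_iff]
  rw [h1]
  simp [hχ1]

end Recursion

section Combine

variable {ζ : ℂ} (hn : 1 < n) (hζ : IsPrimitiveRoot ζ n)
include hn hζ

theorem ES_combine : ∀ (k : ℕ) (S : Finset (Fin n)), S.card = 2 * k →
    ES ζ (fun _ => (1:ℂ)) S = (-1 : ℂ) ^ k * ES ζ (fun τ => ((Perm.sign τ : ℤ) : ℂ)) S := by
  intro k
  induction k with
  | zero =>
    intro S hS
    have hS0 : S = ∅ := Finset.card_eq_zero.1 (by omega)
    subst hS0
    rw [ES_empty _ rfl, ES_empty _ (by simp)]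
    simp
  | succ m ih =>
    intro S hS
    have hpos : 0 < S.card := by omega
    obtain ⟨t, ht⟩ := Finset.card_pos.1 hpos
    rw [ES_rec hn hζ _ 1 (fun τ a b hab => by ring) ht,
        ES_rec hn hζ _ (-1) (fun τ a b hab => by
          simp only [Equiv.Perm.sign_mul, Equiv.Perm.sign_swap hab]
          push_cast
          ring) ht,
        one_mul, Finset.mul_sum, Finset.mul_sum]
    refine Finset.sum_congr rfl fun p hp => ?_
    have hcard : ((S.erase t).erase p).card = 2 * m := by
      rw [Finset.card_erase_of_mem hp, Finset.card_erase_of_mem ht]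
      omega
    rw [ih _ hcard]
    ring

end Combine

section Eigen

variable {ζ : ℂ} (hn : 1 < n) (hζ : IsPrimitiveRoot ζ n)
include hn hζ

theorem zpow_congr {a b : ℤ} (h : a % (n : ℤ) = b % (n : ℤ)) : ζ ^ a = ζ ^ b := by
  have hz : ζ ≠ 0 := zeta_ne_zero hn hζ
  obtain ⟨c, hc⟩ := Int.ModEq.dvd (show a ≡ b [ZMOD (n:ℤ)] from h)
  have hb : b = a + (n : ℤ) * c := by linarith
  rw [hb, zpow_add₀ hz, zpow_mul, zpow_natCast, hζ.pow_eq_one, one_zpow, mul_one]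

theorem zpow_mod (a : ℤ) : ζ ^ (a % (n : ℤ)) = ζ ^ a :=
  zpow_congr hn hζ (Int.emod_emod_of_dvd a dvd_rfl)

theorem fw_shift [NeZero n] (j k : Fin n) : fw ζ j k = fw ζ (j - k) 0 := by
  rw [fw, fw]
  congr 2
  have h0 : ((0 : Fin n) : ℤ) = 0 := by simp
  rw [h0, sub_zero, Fin.coe_int_sub_eq_mod, zpow_mod hn hζ]

theorem fw_zero_ne [NeZero n] {d : Fin n} (hd : d ≠ 0) : ζ ^ ((d : Fin n) : ℤ) ≠ 1 := by
  have h := zpow_ne_one hζ (j := d) (k := 0) hd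
  have h0 : ((0 : Fin n) : ℤ) = 0 := by simp
  rw [h0, sub_zero] at h
  exact h

theorem hsum_base [NeZero n] :
    ∑ d ∈ univ.erase (0 : Fin n), fw ζ d 0 = ((n : ℂ) - 1) / 2 := by
  have h2 : (∑ d ∈ univ.erase (0 : Fin n), fw ζ d 0)
      + (∑ d ∈ univ.erase (0 : Fin n), fw ζ d 0) = (n : ℂ) - 1 := by
    have hneg : ∑ d ∈ univ.erase (0 : Fin n), fw ζ d 0
        = ∑ d ∈ univ.erase (0 : Fin n), fw ζ (-d) 0 := by
      refine Finset.sum_nbij' (fun d => -d) (fun d => -d) ?_ ?_ ?_ ?_ ?_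
      · intro d hd
        rw [Finset.mem_erase] at hd ⊢
        exact ⟨fun hc => hd.1 (neg_eq_zero.1 hc), Finset.mem_univ _⟩
      · intro d hd
        rw [Finset.mem_erase] at hd ⊢
        exact ⟨fun hc => hd.1 (neg_eq_zero.1 hc), Finset.mem_univ _⟩
      · intro d _; exact neg_neg d
      · intro d _; exact neg_neg d
      · intro d _; rw [neg_neg]
    nth_rewrite 1 [hneg]
    rw [← Finset.sum_add_distrib]
    have hone : ∀ d ∈ univ.erase (0 : Fin n), fw ζ (-d) 0 + fw ζ d 0 = 1 := by
      intro d hd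
      have hd0 : d ≠ 0 := (Finset.mem_erase.1 hd).1
      have hshift : fw ζ (-d) 0 = fw ζ 0 d := by
        rw [fw_shift hn hζ 0 d, zero_sub]
      rw [hshift, add_comm]
      exact fw_add_fw hn hζ hd0
    rw [Finset.sum_congr rfl hone, Finset.sum_const,
      Finset.card_erase_of_mem (Finset.mem_univ _), Finset.card_univ, Fintype.card_fin]
    have : ((n - 1 : ℕ) : ℂ) = (n : ℂ) - 1 := by
      have : (1:ℕ) ≤ n := by omega
      push_cast [Nat.cast_sub this]
      ring
    simp [this]
  have h3 : (2 : ℂ) ≠ 0 := two_ne_zero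
  rw [eq_div_iff h3]
  linear_combination h2

theorem geom_zero [NeZero n] {r : ℕ} (hr0 : 0 < r) (hrn : r < n) :
    ∑ d ∈ univ.erase (0 : Fin n), ζ ^ (-((d : Fin n) : ℤ) * r) = -1 := by
  have hz : ζ ≠ 0 := zeta_ne_zero hn hζ
  have hx : ζ ^ (-(r : ℤ)) ≠ 1 := by
    intro hc
    have : ζ ^ ((r : ℤ)) = 1 := by
      have := congrArg (fun z => z⁻¹) hc
      simpa [← zpow_neg] using this
    rw [hζ.zpow_eq_one_iff_dvd] at this
    rcases this with ⟨c, hc2⟩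
    have hrn' : (r : ℤ) < n := by exact_mod_cast hrn
    have hr0' : (0 : ℤ) < r := by exact_mod_cast hr0
    have hn0 : (0 : ℤ) < n := by exact_mod_cast (show 0 < n by omega)
    rcases (lt_trichotomy c 0) with h | h | h
    · have := mul_neg_of_pos_of_neg hn0 h
      linarith
    · subst h
      simp only [mul_zero] at hc2
      linarith
    · have h1 : (1 : ℤ) ≤ c := h
      have : (n : ℤ) * 1 ≤ (n : ℤ) * c := mul_le_mul_of_nonneg_left h1 (le_of_lt hn0)
      linarith
  have hpt : ∀ d : Fin n, ζ ^ (-((d : Fin n) : ℤ) * r) = (ζ ^ (-(r:ℤ))) ^ (d : ℕ) := by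
    intro d
    rw [← zpow_natCast (ζ ^ (-(r:ℤ))) (d : ℕ), ← zpow_mul]
    congr 1
    ring
  have hfull : ∑ d : Fin n, ζ ^ (-((d : Fin n) : ℤ) * r) = 0 := by
    rw [Finset.sum_congr rfl (fun d _ => hpt d)]
    rw [Fin.sum_univ_eq_sum_range (fun i => (ζ ^ (-(r:ℤ))) ^ i) n, geom_sum_eq hx]
    have hxn : (ζ ^ (-(r:ℤ))) ^ n = 1 := by
      rw [← zpow_natCast, ← zpow_mul]
      have : (-(r:ℤ)) * n = n * (-(r:ℤ)) := by ring
      rw [this, zpow_mul, zpow_natCast, hζ.pow_eq_one, one_zpow]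
    rw [hxn, sub_self, zero_div]
  rw [Finset.sum_erase_eq_sub (Finset.mem_univ (0 : Fin n)), hfull]
  have h0 : (((0 : Fin n)) : ℤ) = 0 := by simp
  rw [h0]
  norm_num

theorem hsum_eq [NeZero n] : ∀ m : ℕ, m < n →
    ∑ d ∈ univ.erase (0 : Fin n), ζ ^ (-((d : Fin n) : ℤ) * m) * fw ζ d 0
      = ((n : ℂ) - 1) / 2 - m := by
  intro m
  induction m with
  | zero =>
    intro _
    have hpt : ∀ d ∈ univ.erase (0 : Fin n),
        ζ ^ (-((d : Fin n) : ℤ) * (0:ℕ)) * fw ζ d 0 = fw ζ d 0 := by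
      intro d _
      norm_num
    rw [Finset.sum_congr rfl hpt, hsum_base hn hζ]
    norm_num
  | succ m ih =>
    intro hlt
    have hm : m < n := by omega
    have ihm := ih hm
    have hstep : (∑ d ∈ univ.erase (0 : Fin n), ζ ^ (-((d : Fin n) : ℤ) * m) * fw ζ d 0)
        - (∑ d ∈ univ.erase (0 : Fin n), ζ ^ (-((d : Fin n) : ℤ) * (m+1:ℕ)) * fw ζ d 0)
        = 1 := by
      rw [← Finset.sum_sub_distrib]
      have hpt : ∀ d ∈ univ.erase (0 : Fin n),
          ζ ^ (-((d : Fin n) : ℤ) * m) * fw ζ d 0 - ζ ^ (-((d : Fin n) : ℤ) * (m+1:ℕ)) * fw ζ d 0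
          = -ζ ^ (-((d : Fin n) : ℤ) * (m+1:ℕ)) := by
        intro d hd
        have hd0 : d ≠ 0 := (Finset.mem_erase.1 hd).1
        have hz : ζ ≠ 0 := zeta_ne_zero hn hζ
        have hne1 : ζ ^ ((d : Fin n) : ℤ) ≠ 1 := fw_zero_ne hn hζ hd0
        have hfwd : fw ζ d 0 = (1 - ζ ^ ((d : Fin n) : ℤ))⁻¹ := by
          have h0 : ((0 : Fin n) : ℤ) = 0 := by simp
          rw [fw, h0, sub_zero]
        have hsub : (1 : ℂ) - ζ ^ ((d : Fin n) : ℤ) ≠ 0 :=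
          fun hc => hne1 (by linear_combination -hc)
        have hsplit : ζ ^ (-((d : Fin n) : ℤ) * m)
            = ζ ^ (-((d : Fin n) : ℤ) * (m+1:ℕ)) * ζ ^ ((d : Fin n) : ℤ) := by
          rw [← zpow_add₀ hz]
          congr 1
          push_cast
          ring
        rw [hsplit, hfwd]
        set X := ζ ^ (-((d : Fin n) : ℤ) * (m+1:ℕ)) with hX
        set u := ζ ^ ((d : Fin n) : ℤ) with hu
        field_simp
        ring
      rw [Finset.sum_congr rfl hpt, Finset.sum_neg_distrib,
        geom_zero hn hζ (r := m + 1) (by omega) (by omega)]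
      norm_num
    have hcast : ((m + 1 : ℕ) : ℂ) = (m : ℂ) + 1 := by push_cast; ring
    rw [hcast]
    linear_combination ihm - hstep

end Eigen

section Det

variable {ζ : ℂ} (hn : 1 < n) (hζ : IsPrimitiveRoot ζ n)

/-- the matrix with zero diagonal and entries `1/(1-ζ^(j-k))` -/
noncomputable def Amat (ζ : ℂ) : Matrix (Fin n) (Fin n) ℂ :=
  Matrix.of fun j k => if j = k then 0 else fw ζ j k

/-- the DFT / Vandermonde matrix -/
noncomputable def Vmat (ζ : ℂ) : Matrix (Fin n) (Fin n) ℂ :=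
  Matrix.of fun j m => ζ ^ ((j : ℕ) * (m : ℕ))

theorem ES_sign_eq_det :
    ES ζ (fun τ => ((Perm.sign τ : ℤ) : ℂ)) (univ : Finset (Fin n)) = (Amat (n := n) ζ).det := by
  classical
  rw [← Matrix.det_transpose, Matrix.det_apply']
  rw [← Finset.sum_filter_add_sum_filter_not univ (fun τ : Perm (Fin n) => τ.support = univ)]
  have h2 : (∑ τ ∈ univ.filter (fun τ : Perm (Fin n) => ¬ τ.support = univ),
      ((Perm.sign τ : ℤ) : ℂ) * ∏ i, (Amat (n := n) ζ).transpose (τ i) i) = 0 := by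
    refine Finset.sum_eq_zero fun τ hτ => ?_
    rw [Finset.mem_filter] at hτ
    have hex : ∃ i, τ i = i := by
      by_contra hc
      push_neg at hc
      exact hτ.2 (support_eq_of τ univ (fun x _ => hc x) (by simp))
    obtain ⟨i, hi⟩ := hex
    have hzero : (Amat (n := n) ζ).transpose (τ i) i = 0 := by
      rw [Matrix.transpose_apply, Amat, Matrix.of_apply, if_pos hi.symm]
    have hp : (∏ i : Fin n, (Amat (n := n) ζ).transpose (τ i) i) = 0 :=
      Finset.prod_eq_zero (Finset.mem_univ i) hzero
    rw [hp, mul_zero]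
  rw [h2, add_zero, ES]
  refine Finset.sum_congr rfl fun τ hτ => ?_
  rw [Finset.mem_filter] at hτ
  congr 1
  refine Finset.prod_congr rfl fun i _ => ?_
  rw [Matrix.transpose_apply, Amat, Matrix.of_apply, if_neg ?_]
  intro hc
  exact (mem_support_of hτ.2 (Finset.mem_univ i)) hc.symm

include hn hζ

theorem eigen [NeZero n] :
    Amat (n := n) ζ * Vmat ζ
      = Vmat ζ * Matrix.diagonal (fun m : Fin n => ((n : ℂ) - 1) / 2 - ((m : ℕ) : ℂ)) := by
  ext j m
  rw [Matrix.mul_apply, Matrix.mul_diagonal]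
  rw [← Finset.add_sum_erase univ _ (Finset.mem_univ j)]
  have hjj : Amat (n := n) ζ j j = 0 := by rw [Amat, Matrix.of_apply, if_pos rfl]
  rw [hjj, zero_mul, zero_add]
  have hterm : ∀ k ∈ univ.erase j,
      Amat (n := n) ζ j k * Vmat ζ k m = fw ζ j k * ζ ^ ((k : ℕ) * (m : ℕ)) := by
    intro k hk
    have hkj : k ≠ j := (Finset.mem_erase.1 hk).1
    rw [Amat, Vmat, Matrix.of_apply, Matrix.of_apply, if_neg (fun hc => hkj hc.symm)]
  rw [Finset.sum_congr rfl hterm]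
  have hre : ∑ k ∈ univ.erase j, fw ζ j k * ζ ^ ((k : ℕ) * (m : ℕ))
      = ∑ d ∈ univ.erase 0, ζ ^ ((j : ℕ) * (m : ℕ))
          * (ζ ^ (-((d : Fin n) : ℤ) * (m : ℕ)) * fw ζ d 0) := by
    refine Finset.sum_nbij' (fun k => j - k) (fun d => j - d) ?_ ?_ ?_ ?_ ?_
    · intro k hk
      rw [Finset.mem_erase] at hk ⊢
      refine ⟨fun hc => hk.1 ?_, Finset.mem_univ _⟩
      rw [sub_eq_zero] at hc
      exact hc.symm
    · intro d hd
      rw [Finset.mem_erase] at hd ⊢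
      refine ⟨fun hc => hd.1 ?_, Finset.mem_univ _⟩
      have h2 := congrArg (fun x => j - x) hc
      simp only [sub_sub_cancel, sub_self] at h2
      exact h2
    · intro k _; exact sub_sub_cancel j k
    · intro d _; exact sub_sub_cancel j d
    · intro k hk
      rw [Finset.mem_erase] at hk
      have hz : ζ ≠ 0 := zeta_ne_zero hn hζ
      have hfw : fw ζ j k = fw ζ (j - k) 0 := fw_shift hn hζ j k
      have hVk : (ζ : ℂ) ^ ((k : ℕ) * (m : ℕ))
          = ζ ^ ((j : ℕ) * (m : ℕ)) * ζ ^ (-(((j - k : Fin n)) : ℤ) * (m : ℕ)) := by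
        rw [← zpow_natCast ζ ((k : ℕ) * (m : ℕ)), ← zpow_natCast ζ ((j : ℕ) * (m : ℕ)),
          ← zpow_add₀ hz]
        refine zpow_congr hn hζ ?_
        have h2 : ((((j - k : Fin n)) : ℤ)) ≡ (j : ℤ) - (k : ℤ) [ZMOD (n : ℤ)] := by
          show ((j - k : Fin n) : ℤ) % (n : ℤ) = ((j : ℤ) - (k : ℤ)) % (n : ℤ)
          rw [Fin.coe_int_sub_eq_mod]
          exact Int.emod_emod_of_dvd _ dvd_rfl
        have h3 : (((j : ℕ) * (m : ℕ) : ℕ) : ℤ) + (-(((j - k : Fin n)) : ℤ) * (m : ℕ))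
            ≡ (((j : ℕ) * (m : ℕ) : ℕ) : ℤ) + (-((j : ℤ) - (k : ℤ)) * (m : ℕ)) [ZMOD (n : ℤ)] :=
          Int.ModEq.add_left _ ((h2.neg).mul_right _)
        have h4 : (((j : ℕ) * (m : ℕ) : ℕ) : ℤ) + (-((j : ℤ) - (k : ℤ)) * (m : ℕ))
            = (((k : ℕ) * (m : ℕ) : ℕ) : ℤ) := by push_cast; ring
        have h5 : (((j : ℕ) * (m : ℕ) : ℕ) : ℤ) + (-(((j - k : Fin n)) : ℤ) * (m : ℕ))
            ≡ (((k : ℕ) * (m : ℕ) : ℕ) : ℤ) [ZMOD (n : ℤ)] := h4 ▸ h3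
        exact h5.symm
      rw [hfw, hVk]
      ring
  rw [hre, ← Finset.mul_sum, hsum_eq hn hζ (m : ℕ) m.isLt]
  rw [Vmat, Matrix.of_apply]

theorem det_Amat [NeZero n] :
    (Amat (n := n) ζ).det = ∏ m : Fin n, (((n : ℂ) - 1) / 2 - ((m : ℕ) : ℂ)) := by
  have hAV := congrArg Matrix.det (eigen hn hζ)
  rw [Matrix.det_mul, Matrix.det_mul, Matrix.det_diagonal] at hAV
  have hV : (Vmat (n := n) ζ).det ≠ 0 := by
    have hVv : Vmat (n := n) ζ = Matrix.vandermonde (fun i : Fin n => ζ ^ (i : ℕ)) := by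
      ext j m
      rw [Vmat, Matrix.of_apply, Matrix.vandermonde_apply, pow_mul]
    rw [hVv, Matrix.det_vandermonde, Finset.prod_ne_zero_iff]
    intro i _
    rw [Finset.prod_ne_zero_iff]
    intro k hk
    rw [Finset.mem_Ioi] at hk
    refine sub_ne_zero.2 fun hc => ?_
    have heq := hζ.pow_inj k.isLt i.isLt hc
    exact absurd (Fin.ext heq : k = i) (ne_of_gt hk)
  exact mul_right_cancel₀ hV (by rw [hAV, mul_comm])

end Det

section IntProd

theorem intprod : ∀ k : ℕ,
    (∏ m ∈ Finset.range (2 * k + 2), (2 * (k : ℤ) + 1 - 2 * (m : ℕ)))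
      = (-1) ^ (k + 1) * ((Nat.doubleFactorial (2 * k + 1) : ℤ)) ^ 2 := by
  intro k
  induction k with
  | zero =>
    norm_num [Finset.prod_range_succ, Nat.doubleFactorial]
  | succ r ih =>
    have e1 : 2 * (r + 1) + 2 = (2 * r + 2 + 1) + 1 := by ring
    rw [e1, Finset.prod_range_succ', Finset.prod_range_succ]
    have hcongr : ∀ i ∈ Finset.range (2 * r + 2),
        (2 * ((r : ℕ) + 1 : ℕ) + 1 - 2 * ((i + 1 : ℕ) : ℤ) : ℤ)
          = (2 * (r : ℤ) + 1 - 2 * (i : ℕ)) := by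
      intro i _
      push_cast
      ring
    rw [Finset.prod_congr rfl hcongr, ih]
    have hd : (Nat.doubleFactorial (2 * (r + 1) + 1) : ℤ)
        = (2 * (r : ℤ) + 3) * (Nat.doubleFactorial (2 * r + 1) : ℤ) := by
      have e2 : 2 * (r + 1) + 1 = (2 * r + 1) + 2 := by ring
      rw [e2, Nat.doubleFactorial_add_two]
      push_cast
      ring
    rw [hd]
    push_cast
    ring

end IntProd

end SumDerangementsAux

theorem sum_derangements_even (n : ℕ) (hn : 1 < n) (heven : Even n)
    (ζ : ℂ) (hζ : IsPrimitiveRoot ζ n) :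
    ∑ τ ∈ univ.filter (fun τ : Perm (Fin n) => ∀ j, τ j ≠ j),
        ∏ j : Fin n, (1 - ζ ^ ((j : ℤ) - (τ j : ℤ)))⁻¹ =
      (Nat.doubleFactorial (n - 1) : ℂ) ^ 2 / 2 ^ n := by
  classical
  haveI : NeZero n := ⟨by omega⟩
  obtain ⟨k, hk⟩ : ∃ k, n = 2 * k + 2 := by
    obtain ⟨m, hm⟩ := heven
    exact ⟨m - 1, by omega⟩
  have h1 : (∑ τ ∈ univ.filter (fun τ : Perm (Fin n) => ∀ j, τ j ≠ j),
      ∏ j : Fin n, (1 - ζ ^ ((j : ℤ) - (τ j : ℤ)))⁻¹)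
      = SumDerangementsAux.ES ζ (fun _ => (1 : ℂ)) (univ : Finset (Fin n)) := by
    rw [SumDerangementsAux.ES]
    refine Finset.sum_congr ?_ fun τ _ => ?_
    · refine Finset.filter_congr fun τ _ => ?_
      constructor
      · intro h
        exact SumDerangementsAux.support_eq_of τ univ (fun x _ => h x) (by simp)
      · intro h j
        exact SumDerangementsAux.mem_support_of h (Finset.mem_univ j)
    · rw [one_mul]
      rfl
  rw [h1]
  have hcard : (univ : Finset (Fin n)).card = 2 * (k + 1) := by
    rw [Finset.card_univ, Fintype.card_fin]
    omega
  rw [SumDerangementsAux.ES_combine hn hζ (k + 1) univ hcard,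
      SumDerangementsAux.ES_sign_eq_det,
      SumDerangementsAux.det_Amat hn hζ]
  have hprod : (∏ m : Fin n, (((n : ℂ) - 1) / 2 - ((m : ℕ) : ℂ)))
      = ((-1 : ℂ) ^ (k + 1) * ((Nat.doubleFactorial (n - 1) : ℂ)) ^ 2) / 2 ^ n := by
    have hterm : ∀ m : Fin n, ((n : ℂ) - 1) / 2 - ((m : ℕ) : ℂ)
        = ((2 * (k : ℤ) + 1 - 2 * ((m : ℕ) : ℤ) : ℤ) : ℂ) / 2 := by
      intro m
      subst hk
      push_cast
      ring
    rw [Finset.prod_congr rfl (fun m _ => hterm m), Finset.prod_div_distrib,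
      Finset.prod_const, Finset.card_univ, Fintype.card_fin]
    congr 1
    have hint : (∏ m : Fin n, ((2 * (k : ℤ) + 1 - 2 * ((m : ℕ) : ℤ) : ℤ) : ℂ))
        = (((∏ m ∈ Finset.range (2 * k + 2), (2 * (k : ℤ) + 1 - 2 * (m : ℕ))) : ℤ) : ℂ) := by
      rw [Int.cast_prod]
      rw [← Fin.prod_univ_eq_prod_range
        (fun m : ℕ => (((2 * (k : ℤ) + 1 - 2 * (m : ℕ)) : ℤ) : ℂ)) (2 * k + 2), ← hk]
    rw [hint, SumDerangementsAux.intprod k]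
    have hnn : n - 1 = 2 * k + 1 := by omega
    rw [hnn]
    push_cast
    ring
  rw [hprod]
  have hsq : ((-1 : ℂ)) ^ (k + 1) * ((-1 : ℂ)) ^ (k + 1) = 1 := by
    rw [← pow_add, show (k + 1) + (k + 1) = 2 * (k + 1) by ring, pow_mul]
    norm_num
  have h2n : (2 : ℂ) ^ n ≠ 0 := pow_ne_zero _ two_ne_zero
  field_simp
  linear_combination ((Nat.doubleFactorial (n - 1) : ℂ)) ^ 2 * hsq
end

section
/- For any positive integer m and any matrix A over a field whose entries satisfy A[j][k] = -A[k][j] for j ≠ k (i.e., the function τ ↦ Π_{j: τ(j)≠j} A[j][τ(j)] changes sign under τ ↦ τ⁻¹ for cycles of odd length), the sum Σ_{τ ∈ S_m} Π_{j: τ(j)≠j} A[j][τ(j)] equals Σ over permutations τ all of whose nontrivial cycles have even length of Π_{j: τ(j)≠j} A[j][τ(j)]. In particular, with A[j][k] = (x_j+x_k)/(x_j-x_k) for j≠k, per of the matrix (with diagonal 1) equals 1 + Σ_{τ ∈ E_m} f(τ), where E_m is the set of non-identity permutations of {1,...,m} all of whose cycles in the disjoint cycle decomposition have even length. -/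
open Equiv Finset

open scoped Classical

namespace EvenAux

variable {α : Type*} [Fintype α] [DecidableEq α]

/-- The permutation obtained from `f` by inverting the cycle of `a`. -/
noncomputable def flip (f : Perm α) (a : α) : Perm α :=
  f * (f.cycleOf a)⁻¹ * (f.cycleOf a)⁻¹

lemma cycleOf_inv_apply (f : Perm α) (a j : α) :
    (f.cycleOf a)⁻¹ j = if f.SameCycle a j then f⁻¹ j else j := by
  rw [Equiv.Perm.cycleOf_inv, Equiv.Perm.cycleOf_apply]
  simp [Equiv.Perm.sameCycle_inv]

lemma flip_apply (f : Perm α) (a j : α) :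
    flip f a j = if f.SameCycle a j then f⁻¹ j else f j := by
  unfold flip
  by_cases h : f.SameCycle a j
  · have h1 : (f.cycleOf a)⁻¹ j = f⁻¹ j := by rw [cycleOf_inv_apply, if_pos h]
    have h2 : (f.cycleOf a)⁻¹ (f⁻¹ j) = f⁻¹ (f⁻¹ j) := by
      rw [cycleOf_inv_apply, if_pos (show f.SameCycle a (f⁻¹ j) from h.symm_apply_right)]
    rw [Equiv.Perm.mul_apply, Equiv.Perm.mul_apply, h1, h2, if_pos h]
    exact Equiv.apply_symm_apply f _
  · have h1 : (f.cycleOf a)⁻¹ j = j := by rw [cycleOf_inv_apply, if_neg h]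
    simp [Equiv.Perm.mul_apply, h1, h]

lemma flip_inv_apply (f : Perm α) (a j : α) :
    (flip f a)⁻¹ j = if f.SameCycle a j then f j else f⁻¹ j := by
  apply (flip f a).injective
  rw [show ∀ (g : Perm α) (y : α), g (g⁻¹ y) = y from fun g y => g.apply_symm_apply y]
  by_cases h : f.SameCycle a j
  · rw [if_pos h, flip_apply, if_pos h.apply_right, show ∀ (g : Perm α) (y : α), g⁻¹ (g y) = y from fun g y => g.symm_apply_apply y]
  · rw [if_neg h, flip_apply,
      if_neg (show ¬ f.SameCycle a (f⁻¹ j) from fun hh => h (Equiv.Perm.sameCycle_symm_apply_right.mp hh)),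
      show ∀ (g : Perm α) (y : α), g (g⁻¹ y) = y from fun g y => g.apply_symm_apply y]

lemma sameCycle_pow_inv_right (f : Perm α) (x : α) (n : ℕ) (y : α) :
    f.SameCycle x (((f ^ n)⁻¹ : Perm α) y) ↔ f.SameCycle x y := by
  have h : ((f ^ n)⁻¹ : Perm α) y = (f ^ (-(n : ℤ))) y := by simp
  rw [h, Equiv.Perm.sameCycle_zpow_right]

lemma flip_pow_apply (f : Perm α) (a : α) (n : ℕ) (j : α) :
    (flip f a ^ n) j = if f.SameCycle a j then ((f ^ n)⁻¹ : Perm α) j else (f ^ n) j := by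
  induction n generalizing j with
  | zero => simp
  | succ n ih =>
    rw [pow_succ, Equiv.Perm.mul_apply, flip_apply]
    by_cases h : f.SameCycle a j
    · rw [if_pos h, if_pos h, ih, if_pos (show f.SameCycle a (f⁻¹ j) from h.symm_apply_right)]
      simp [pow_succ', mul_inv_rev]
    · rw [if_neg h, if_neg h, ih,
        if_neg (fun hh => h (Equiv.Perm.sameCycle_apply_right.mp hh))]
      simp [pow_succ]

lemma flip_inv_pow_apply (f : Perm α) (a : α) (n : ℕ) (j : α) :
    ((flip f a)⁻¹ ^ n) j = if f.SameCycle a j then (f ^ n) j else ((f ^ n)⁻¹ : Perm α) j := by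
  induction n generalizing j with
  | zero => simp
  | succ n ih =>
    rw [pow_succ, Equiv.Perm.mul_apply, flip_inv_apply]
    by_cases h : f.SameCycle a j
    · rw [if_pos h, if_pos h, ih, if_pos h.apply_right]
      simp [pow_succ]
    · rw [if_neg h, if_neg h, ih,
        if_neg (show ¬ f.SameCycle a (f⁻¹ j) from fun hh => h (Equiv.Perm.sameCycle_symm_apply_right.mp hh))]
      simp [pow_succ', mul_inv_rev]

lemma flip_zpow_apply (f : Perm α) (a : α) (n : ℤ) (j : α) :
    (flip f a ^ n) j = if f.SameCycle a j then ((f ^ n)⁻¹ : Perm α) j else (f ^ n) j := by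
  cases n with
  | ofNat k => simpa using flip_pow_apply f a k j
  | negSucc k =>
    rw [zpow_negSucc, ← inv_pow, flip_inv_pow_apply, zpow_negSucc]
    simp

lemma sameCycle_flip (f : Perm α) (a b y : α) :
    (flip f a).SameCycle b y ↔ f.SameCycle b y := by
  constructor
  · rintro ⟨n, hn⟩
    rw [flip_zpow_apply] at hn
    by_cases h : f.SameCycle a b
    · rw [if_pos h] at hn
      exact ⟨-n, by rw [zpow_neg]; exact hn⟩
    · rw [if_neg h] at hn
      exact ⟨n, hn⟩
  · rintro ⟨n, hn⟩
    by_cases h : f.SameCycle a b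
    · exact ⟨-n, by rw [flip_zpow_apply, if_pos h, zpow_neg, inv_inv]; exact hn⟩
    · exact ⟨n, by rw [flip_zpow_apply, if_neg h]; exact hn⟩

lemma flip_support (f : Perm α) (a : α) : (flip f a).support = f.support := by
  ext j
  rw [Equiv.Perm.mem_support, Equiv.Perm.mem_support, flip_apply]
  by_cases h : f.SameCycle a j
  · simp only [if_pos h, ne_eq, Equiv.Perm.inv_eq_iff_eq]
    rw [eq_comm]
  · rw [if_neg h]

lemma flip_support_cycleOf (f : Perm α) (a b : α) :
    ((flip f a).cycleOf b).support = (f.cycleOf b).support := by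
  ext y
  rw [Equiv.Perm.mem_support_cycleOf_iff, Equiv.Perm.mem_support_cycleOf_iff,
    sameCycle_flip, flip_support]

lemma flip_cycleOf (f : Perm α) (a : α) :
    (flip f a).cycleOf a = (f.cycleOf a)⁻¹ := by
  ext j
  by_cases h : f.SameCycle a j
  · rw [Equiv.Perm.cycleOf_apply, if_pos ((sameCycle_flip f a a j).mpr h), flip_apply,
      if_pos h, cycleOf_inv_apply, if_pos h]
  · rw [Equiv.Perm.cycleOf_apply, if_neg (fun hh => h ((sameCycle_flip f a a j).mp hh)),
      cycleOf_inv_apply, if_neg h]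

lemma flip_flip (f : Perm α) (a : α) : flip (flip f a) a = f := by
  rw [show flip (flip f a) a
      = flip f a * ((flip f a).cycleOf a)⁻¹ * ((flip f a).cycleOf a)⁻¹ from rfl,
    flip_cycleOf, inv_inv]
  unfold flip
  group

noncomputable def oddSet (f : Perm α) : Finset α :=
  f.support.filter (fun b => ¬ Even ((f.cycleOf b).support.card))

lemma oddSet_nonempty_iff (f : Perm α) :
    (oddSet f).Nonempty ↔ ¬ ∀ i ∈ f.cycleType, Even i := by
  constructor
  · rintro ⟨b, hb⟩ hall
    rw [oddSet, mem_filter, Equiv.Perm.mem_support] at hb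
    refine hb.2 (hall _ ?_)
    rw [Equiv.Perm.cycleType_def, Multiset.mem_map]
    exact ⟨f.cycleOf b, (Equiv.Perm.cycleOf_mem_cycleFactorsFinset_iff.mpr
      (Equiv.Perm.mem_support.mpr hb.1)).out, rfl⟩
  · intro h
    push_neg at h
    obtain ⟨i, hi, hodd⟩ := h
    rw [Equiv.Perm.cycleType_def, Multiset.mem_map] at hi
    obtain ⟨c, hc, rfl⟩ := hi
    have hc' : c ∈ f.cycleFactorsFinset := hc
    have hcyc := (Equiv.Perm.mem_cycleFactorsFinset_iff.mp hc').1
    obtain ⟨b, hb⟩ := hcyc.nonempty_support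
    refine ⟨b, ?_⟩
    have hfb : f b ≠ b := by
      rw [← (Equiv.Perm.mem_cycleFactorsFinset_iff.mp hc').2 b hb]
      exact Equiv.Perm.mem_support.mp hb
    rw [oddSet, mem_filter, ← Equiv.Perm.cycle_is_cycleOf hb hc']
    exact ⟨Equiv.Perm.mem_support.mpr hfb, hodd⟩

lemma prod_flip {F : Type*} [CommRing F] (A : Matrix α α F)
    (hA : ∀ j k, j ≠ k → A j k = - A k j) (f : Perm α) (a : α) (ha : a ∈ oddSet f) :
    ∏ j ∈ (flip f a).support, A j (flip f a j) = - ∏ j ∈ f.support, A j (f j) := by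
  rw [flip_support]
  rw [oddSet, mem_filter] at ha
  have hasupp : a ∈ f.support := ha.1
  set sc := (f.cycleOf a).support with hsc
  have hsub : sc ⊆ f.support := Equiv.Perm.support_cycleOf_le f a
  have hmem : ∀ j, j ∈ sc ↔ f.SameCycle a j := by
    intro j
    rw [hsc, Equiv.Perm.mem_support_cycleOf_iff]
    exact ⟨fun h => h.1, fun h => ⟨h, hasupp⟩⟩
  rw [← Finset.prod_sdiff hsub, ← Finset.prod_sdiff hsub]
  have h1 : ∀ j ∈ f.support \ sc, A j (flip f a j) = A j (f j) := by
    intro j hj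
    rw [mem_sdiff] at hj
    rw [flip_apply, if_neg (fun hh => hj.2 ((hmem j).mpr hh))]
  rw [Finset.prod_congr rfl h1]
  have h2 : ∀ j ∈ sc, A j (flip f a j) = A j (f⁻¹ j) := by
    intro j hj
    rw [flip_apply, if_pos ((hmem j).mp hj)]
  rw [Finset.prod_congr rfl h2]
  have h3 : ∏ j ∈ sc, A j (f⁻¹ j) = ∏ k ∈ sc, A (f k) k := by
    refine Finset.prod_nbij' (fun j => f⁻¹ j) (fun k => f k) ?_ ?_ ?_ ?_ ?_
    · intro j hj
      rw [hmem] at hj ⊢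
      exact hj.symm_apply_right
    · intro k hk
      rw [hmem] at hk ⊢
      exact hk.apply_right
    · intro j _; simp
    · intro k _; simp
    · intro j hj
      rw [show ∀ (g : Perm α) (y : α), g (g⁻¹ y) = y from fun g y => g.apply_symm_apply y]
  rw [h3]
  have h4 : ∀ k ∈ sc, A (f k) k = -1 * A k (f k) := by
    intro k hk
    have : k ≠ f k := fun h => (Equiv.Perm.mem_support.mp (hsub hk)) h.symm
    rw [hA (f k) k (fun h => this h.symm)]
    ring
  rw [Finset.prod_congr rfl h4, Finset.prod_mul_distrib, Finset.prod_const]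
  have hodd : Odd sc.card := Nat.not_even_iff_odd.mp ha.2
  rw [hodd.neg_one_pow]
  ring


lemma oddSet_flip (f : Perm α) (a : α) : oddSet (flip f a) = oddSet f := by
  unfold oddSet
  rw [flip_support]
  refine Finset.filter_congr fun b _ => ?_
  rw [flip_support_cycleOf]

lemma min'_congr {s t : Finset α} [LinearOrder α] (hs : s.Nonempty) (ht : t.Nonempty)
    (h : s = t) : s.min' hs = t.min' ht := by subst h; rfl

lemma sum_eq {F : Type*} [Field F] [CharZero F] [LinearOrder α]
    (A : Matrix α α F) (hA : ∀ j k, j ≠ k → A j k = - A k j) :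
    (∑ τ : Perm α, ∏ j ∈ τ.support, A j (τ j)) =
      ∑ τ ∈ univ.filter (fun τ : Perm α => ∀ i ∈ τ.cycleType, Even i),
        ∏ j ∈ τ.support, A j (τ j) := by
  rw [← Finset.sum_filter_add_sum_filter_not univ
    (fun τ : Perm α => ∀ i ∈ τ.cycleType, Even i) (fun τ => ∏ j ∈ τ.support, A j (τ j))]
  have hzero : ∑ τ ∈ univ.filter (fun τ : Perm α => ¬ ∀ i ∈ τ.cycleType, Even i),
      ∏ j ∈ τ.support, A j (τ j) = 0 := by
    have hne : ∀ τ : Perm α, τ ∈ univ.filter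
        (fun τ : Perm α => ¬ ∀ i ∈ τ.cycleType, Even i) → (oddSet τ).Nonempty := by
      intro τ hτ
      rw [oddSet_nonempty_iff]
      exact (mem_filter.mp hτ).2
    refine Finset.sum_involution (fun τ hτ => flip τ ((oddSet τ).min' (hne τ hτ))) ?_ ?_ ?_ ?_
    · intro τ hτ
      rw [prod_flip A hA τ _ (Finset.min'_mem _ _)]
      ring
    · intro τ hτ hp heq
      beta_reduce at heq
      apply hp
      have h2 := prod_flip A hA τ ((oddSet τ).min' (hne τ hτ)) (Finset.min'_mem _ _)
      rw [heq] at h2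
      have : (2 : F) * ∏ j ∈ τ.support, A j (τ j) = 0 := by linear_combination h2
      simpa using this
    · intro τ hτ
      rw [mem_filter]
      refine ⟨mem_univ _, ?_⟩
      rw [← oddSet_nonempty_iff, oddSet_flip]
      exact hne τ hτ
    · intro τ hτ
      beta_reduce
      have hso : oddSet (flip τ ((oddSet τ).min' (hne τ hτ))) = oddSet τ := oddSet_flip _ _
      rw [min'_congr _ (hne τ hτ) hso, flip_flip]
  rw [hzero, add_zero]

end EvenAux


/- For a matrix `A` over a field with `A j k = - A k j` off the diagonal,
`∑_{τ ∈ S_m} ∏_{j : τ(j) ≠ j} A j (τ j)` equals the same sum restricted to permutations all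
of whose cycles have even length. In particular, with `A j k = (x_j + x_k)/(x_j - x_k)` for
`j ≠ k`, the permanent of the matrix with diagonal `1` equals `1 + ∑_{τ ∈ E_m} f(τ)`, where
`E_m` consists of the non-identity permutations all of whose cycles have even length. -/
open scoped Classical in
theorem sum_perm_eq_sum_even_cycle_type {F : Type*} [Field F] [CharZero F]
    (m : ℕ) (hm : 0 < m) (A : Matrix (Fin m) (Fin m) F)
    (hA : ∀ j k, j ≠ k → A j k = - A k j)
    (x : Fin m → F) (hx : Function.Injective x) :
    (∑ τ : Perm (Fin m), ∏ j ∈ τ.support, A j (τ j)) =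
      (∑ τ ∈ univ.filter (fun τ : Perm (Fin m) => ∀ i ∈ τ.cycleType, Even i),
        ∏ j ∈ τ.support, A j (τ j)) ∧
    Matrix.permanent (Matrix.of fun j k : Fin m =>
        if j = k then (1 : F) else (x j + x k) / (x j - x k)) =
      1 + ∑ τ ∈ univ.filter
          (fun τ : Perm (Fin m) => τ ≠ 1 ∧ ∀ i ∈ τ.cycleType, Even i),
        ∏ j ∈ τ.support, (x j + x (τ j)) / (x j - x (τ j)) := by
  constructor
  · exact EvenAux.sum_eq A hA
  · set B : Matrix (Fin m) (Fin m) F := Matrix.of fun j k : Fin m =>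
      if j = k then (1 : F) else (x j + x k) / (x j - x k) with hBdef
    have hB : ∀ j k, j ≠ k → B j k = - B k j := by
      intro j k hjk
      have hxx : x j ≠ x k := fun h => hjk (hx h)
      have h1 : x j - x k ≠ 0 := sub_ne_zero.mpr hxx
      have h2 : x k - x j ≠ 0 := sub_ne_zero.mpr hxx.symm
      rw [hBdef]
      simp only [Matrix.of_apply, if_neg hjk, if_neg (Ne.symm hjk)]
      field_simp
      ring
    rw [Matrix.permanent]
    have step0 : ∑ σ : Perm (Fin m), ∏ i, B (σ i) i
        = ∑ σ : Perm (Fin m), ∏ i, B i (σ i) := by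
      rw [← Equiv.sum_comp (Equiv.inv (Perm (Fin m)))
        (fun σ : Perm (Fin m) => ∏ i, B (σ i) i)]
      refine Finset.sum_congr rfl fun σ _ => ?_
      rw [show (Equiv.inv (Perm (Fin m))) σ = σ⁻¹ from rfl,
        ← Equiv.prod_comp σ (fun i => B (σ⁻¹ i) i)]
      simp
    rw [step0]
    have step2 : ∀ σ : Perm (Fin m), ∏ i, B i (σ i) = ∏ i ∈ σ.support, B i (σ i) := by
      intro σ
      refine (Finset.prod_subset (subset_univ _) (fun j _ hj => ?_)).symm
      rw [Equiv.Perm.notMem_support] at hj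
      rw [hBdef]
      simp [hj]
    rw [Finset.sum_congr rfl (fun σ _ => step2 σ), EvenAux.sum_eq B hB]
    have h1S : (1 : Perm (Fin m)) ∈ univ.filter
        (fun τ : Perm (Fin m) => ∀ i ∈ τ.cycleType, Even i) := by
      simp [Equiv.Perm.cycleType_one]
    rw [← Finset.add_sum_erase _ _ h1S]
    have hset : (univ.filter (fun τ : Perm (Fin m) =>
        ∀ i ∈ τ.cycleType, Even i)).erase 1 =
        univ.filter (fun τ : Perm (Fin m) => τ ≠ 1 ∧ ∀ i ∈ τ.cycleType, Even i) := by
      ext τ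
      simp [mem_erase, mem_filter, and_comm]
    rw [hset]
    congr 1
    · simp
    · refine Finset.sum_congr rfl fun τ hτ => Finset.prod_congr rfl fun j hj => ?_
      have hj' : j ≠ τ j := fun h => (Equiv.Perm.mem_support.mp hj) h.symm
      rw [hBdef]
      simp [hj']
end
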